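/- arXiv:2004.03862 — 9 statements merged into one kernel-verified Lean document; each statement's English description precedes it below -/
import Mathlib

section
/- Fix a real number σ with 0 ≤ σ < 1. Then exp(−z)·g(s,k,z) > 0 (equivalently g(s,k,z) > 0) for all z > 0 and all k, s ∈ [−1,1]. -/
noncomputable section

open Real

/-- `F(z) = ((3+σ)/2)·sinh(2z) − (1−σ)·z`. -/
def F (σ z : ℝ) : ℝ := ((3 + σ) / 2) * Real.sinh (2 * z) - (1 - σ) * z

/-- `F̄(z) = ((3+σ)/2)·sinh(2z) + (1−σ)·z`. -/
def Fbar (σ z : ℝ) : ℝ := ((3 + σ) / 2) * Real.sinh (2 * z) + (1 - σ) * z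

/-- `ψ(k,z)`. -/
def psi (σ k z : ℝ) : ℝ :=
  (2 + (1 - σ) * z) * Real.cosh (k * z) * Real.cosh z
    + (-(1 + σ) + (1 - σ) * z) * Real.cosh (k * z) * Real.sinh z
    - (1 - σ) * k * z * Real.sinh (k * z) * Real.cosh z
    - (1 - σ) * k * z * Real.sinh (k * z) * Real.sinh z

/-- `ξ(k,z)`. -/
def xi (σ k z : ℝ) : ℝ :=
  -(1 - σ) * k * z * Real.cosh (k * z) * Real.cosh z
    - (1 - σ) * k * z * Real.cosh (k * z) * Real.sinh z
    + (-(1 + σ) + (1 - σ) * z) * Real.sinh (k * z) * Real.cosh z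
    + (2 + (1 - σ) * z) * Real.sinh (k * z) * Real.sinh z

/-- `ζ(k,z)`. -/
def zeta (σ k z : ℝ) : ℝ :=
  (4 / (1 - σ) - (1 + σ) * z) * Real.cosh (k * z) * Real.cosh z
    + ((1 + σ) ^ 2 / (1 - σ) + 2 * z) * Real.cosh (k * z) * Real.sinh z
    - 2 * k * z * Real.sinh (k * z) * Real.cosh z
    + (1 + σ) * k * z * Real.sinh (k * z) * Real.sinh z

/-- `η(k,z)`. -/
def eta (σ k z : ℝ) : ℝ :=
  (1 + σ) * k * z * Real.cosh (k * z) * Real.cosh z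
    - 2 * k * z * Real.cosh (k * z) * Real.sinh z
    + ((1 + σ) ^ 2 / (1 - σ) + 2 * z) * Real.sinh (k * z) * Real.cosh z
    + (4 / (1 - σ) - (1 + σ) * z) * Real.sinh (k * z) * Real.sinh z

/-- `g(s,k,z)`. -/
def g (σ s k z : ℝ) : ℝ :=
  Real.cosh (s * z) *
      (zeta σ k z / F σ z + z * psi σ k z / F σ z - s * z * xi σ k z / Fbar σ z)
    + Real.sinh (s * z) *
      (eta σ k z / Fbar σ z + z * xi σ k z / Fbar σ z - s * z * psi σ k z / F σ z)

/-- `h(s,k,z) = (1+z·|k−s|)·exp(−z·|k−s|)`. -/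
def hfun (s k z : ℝ) : ℝ := (1 + z * |k - s|) * Real.exp (-(z * |k - s|))

/-- `φ(s,k,z) = exp(−z)·g(s,k,z) + h(s,k,z)`. -/
def phi (σ s k z : ℝ) : ℝ := Real.exp (-z) * g σ s k z + hfun s k z

/-! ### Auxiliary material for the positivity proof -/

/-- The manifestly-positive polynomial equal to `16·(1−σ)·F·F̄·X³YS·g`
where `X = e^z`, `Y = e^{kz}`, `S = e^{sz}`. -/
def PolyG (σ z k s X Y S : ℝ) : ℝ :=
  (3+σ) * (σ^2+2*σ+5) * ((X^4-1)*(X^2*Y^2*S^2+X^2))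
  + (3+σ) * (1-σ)^2 * z *
      ((2-(k+s))*X^6*Y^2*S^2 + (2+(k+s))*X^6 + (2+(k+s))*X^2*Y^2*S^2 + (2-(k+s))*X^2)
  + 2*(3+σ)*(1-σ)^2*z^2 *
      ((1-k)*(1-s)*(X^6*Y^2*S^2-X^2) + (1+k)*(1+s)*(X^6-X^2*Y^2*S^2))
  + (1-σ) * (Y^2*((3+σ)^2*(X^4-1)*(1-z*(k-s)) + 4*(σ^2+2*σ+5)*z*X^4)
           + S^2*((3+σ)^2*(X^4-1)*(1+z*(k-s)) + 4*(σ^2+2*σ+5)*z*X^4))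
  + 4*(1-σ)*(1-σ)^2*z^2*X^4*((2+s-k)*Y^2 + (2+k-s)*S^2)
  + 8*(1-σ)*(1-σ)^2*z^3*X^4*((1+s)*(1-k)*Y^2 + (1-s)*(1+k)*S^2)

lemma expand_F (σ z : ℝ) :
    4 * Real.exp z ^ 2 * F σ z
      = (3+σ)*(Real.exp z ^ 4 - 1) - 4*(1-σ)*z*Real.exp z ^ 2 := by
  have h2 : Real.exp (2*z) = Real.exp z * Real.exp z := by rw [two_mul, Real.exp_add]
  rw [F, Real.sinh_eq, Real.exp_neg, h2]
  have := Real.exp_ne_zero z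
  field_simp
  ring

lemma expand_Fbar (σ z : ℝ) :
    4 * Real.exp z ^ 2 * Fbar σ z
      = (3+σ)*(Real.exp z ^ 4 - 1) + 4*(1-σ)*z*Real.exp z ^ 2 := by
  have h2 : Real.exp (2*z) = Real.exp z * Real.exp z := by rw [two_mul, Real.exp_add]
  rw [Fbar, Real.sinh_eq, Real.exp_neg, h2]
  have := Real.exp_ne_zero z
  field_simp
  ring

lemma expand_psi (σ k z : ℝ) :
    4 * (Real.exp z * Real.exp (k*z)) * psi σ k z
      = (1-σ)*(1+2*z)*Real.exp z^2*(Real.exp (k*z)^2+1)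
        + (3+σ)*(Real.exp (k*z)^2+1)
        - 2*(1-σ)*k*z*Real.exp z^2*(Real.exp (k*z)^2-1) := by
  rw [psi, Real.cosh_eq, Real.sinh_eq, Real.cosh_eq, Real.sinh_eq, Real.exp_neg, Real.exp_neg]
  have h1 := Real.exp_ne_zero z
  have h2 := Real.exp_ne_zero (k*z)
  field_simp
  ring

lemma expand_xi (σ k z : ℝ) :
    4 * (Real.exp z * Real.exp (k*z)) * xi σ k z
      = (1-σ)*(1+2*z)*Real.exp z^2*(Real.exp (k*z)^2-1)
        - (3+σ)*(Real.exp (k*z)^2-1)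
        - 2*(1-σ)*k*z*Real.exp z^2*(Real.exp (k*z)^2+1) := by
  rw [xi, Real.cosh_eq, Real.sinh_eq, Real.cosh_eq, Real.sinh_eq, Real.exp_neg, Real.exp_neg]
  have h1 := Real.exp_ne_zero z
  have h2 := Real.exp_ne_zero (k*z)
  field_simp
  ring

lemma expand_zeta (σ k z : ℝ) (hσ : (1:ℝ) - σ ≠ 0) :
    4 * (Real.exp z * Real.exp (k*z)) * ((1-σ) * zeta σ k z)
      = (4+(1+σ)^2+(1-σ)^2*z)*Real.exp z^2*(Real.exp (k*z)^2+1)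
        + (3+σ)*(1-σ)*(1-z)*(Real.exp (k*z)^2+1)
        - (1-σ)^2*k*z*Real.exp z^2*(Real.exp (k*z)^2-1)
        - (3+σ)*(1-σ)*k*z*(Real.exp (k*z)^2-1) := by
  rw [zeta, Real.cosh_eq, Real.sinh_eq, Real.cosh_eq, Real.sinh_eq, Real.exp_neg, Real.exp_neg]
  have h1 := Real.exp_ne_zero z
  have h2 := Real.exp_ne_zero (k*z)
  field_simp
  ring

lemma expand_eta (σ k z : ℝ) (hσ : (1:ℝ) - σ ≠ 0) :
    4 * (Real.exp z * Real.exp (k*z)) * ((1-σ) * eta σ k z)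
      = -((1-σ)^2*k*z*Real.exp z^2*(Real.exp (k*z)^2+1))
        + (3+σ)*(1-σ)*k*z*(Real.exp (k*z)^2+1)
        + (4+(1+σ)^2+(1-σ)^2*z)*Real.exp z^2*(Real.exp (k*z)^2-1)
        - (3+σ)*(1-σ)*(1-z)*(Real.exp (k*z)^2-1) := by
  rw [eta, Real.cosh_eq, Real.sinh_eq, Real.cosh_eq, Real.sinh_eq, Real.exp_neg, Real.exp_neg]
  have h1 := Real.exp_ne_zero z
  have h2 := Real.exp_ne_zero (k*z)
  field_simp
  ring

lemma expand_cosh (s z : ℝ) :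
    2 * Real.exp (s*z) * Real.cosh (s*z) = Real.exp (s*z)^2 + 1 := by
  rw [Real.cosh_eq, Real.exp_neg]
  have := Real.exp_ne_zero (s*z)
  field_simp

lemma expand_sinh (s z : ℝ) :
    2 * Real.exp (s*z) * Real.sinh (s*z) = Real.exp (s*z)^2 - 1 := by
  rw [Real.sinh_eq, Real.exp_neg]
  have := Real.exp_ne_zero (s*z)
  field_simp

lemma g_mul_FF (σ s k z : ℝ) (hF : F σ z ≠ 0) (hFb : Fbar σ z ≠ 0) :
    g σ s k z * (F σ z * Fbar σ z)
      = Real.cosh (s*z) * (Fbar σ z * zeta σ k z + z * (Fbar σ z * psi σ k z)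
          - s * z * (F σ z * xi σ k z))
        + Real.sinh (s*z) * (F σ z * eta σ k z + z * (F σ z * xi σ k z)
          - s * z * (Fbar σ z * psi σ k z)) := by
  rw [g]
  field_simp

set_option maxHeartbeats 4000000 in
lemma key_identity (σ s k z : ℝ) (hσ : (1:ℝ) - σ ≠ 0)
    (hF : F σ z ≠ 0) (hFb : Fbar σ z ≠ 0) :
    ((1-σ) * F σ z * Fbar σ z * (16 * Real.exp z ^ 3 * Real.exp (k*z) * Real.exp (s*z)))
      * g σ s k z * 2
      = 2 * PolyG σ z k s (Real.exp z) (Real.exp (k*z)) (Real.exp (s*z)) := by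
  have h := g_mul_FF σ s k z hF hFb
  calc ((1-σ) * F σ z * Fbar σ z * (16 * Real.exp z ^ 3 * Real.exp (k*z) * Real.exp (s*z)))
        * g σ s k z * 2
      = (32 * Real.exp z ^ 3 * Real.exp (k*z) * Real.exp (s*z)) * (1-σ)
          * (g σ s k z * (F σ z * Fbar σ z)) := by ring
    _ = (32 * Real.exp z ^ 3 * Real.exp (k*z) * Real.exp (s*z)) * (1-σ)
          * (Real.cosh (s*z) * (Fbar σ z * zeta σ k z + z * (Fbar σ z * psi σ k z)
              - s * z * (F σ z * xi σ k z))
            + Real.sinh (s*z) * (F σ z * eta σ k z + z * (F σ z * xi σ k z)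
              - s * z * (Fbar σ z * psi σ k z))) := by rw [h]
    _ = (2 * Real.exp (s*z) * Real.cosh (s*z)) *
          ( (4 * Real.exp z ^ 2 * Fbar σ z)
              * (4 * (Real.exp z * Real.exp (k*z)) * ((1-σ) * zeta σ k z))
            + (1-σ) * z * ((4 * Real.exp z ^ 2 * Fbar σ z)
              * (4 * (Real.exp z * Real.exp (k*z)) * psi σ k z))
            - (1-σ) * (s*z) * ((4 * Real.exp z ^ 2 * F σ z)
              * (4 * (Real.exp z * Real.exp (k*z)) * xi σ k z)) )
        + (2 * Real.exp (s*z) * Real.sinh (s*z)) *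
          ( (4 * Real.exp z ^ 2 * F σ z)
              * (4 * (Real.exp z * Real.exp (k*z)) * ((1-σ) * eta σ k z))
            + (1-σ) * z * ((4 * Real.exp z ^ 2 * F σ z)
              * (4 * (Real.exp z * Real.exp (k*z)) * xi σ k z))
            - (1-σ) * (s*z) * ((4 * Real.exp z ^ 2 * Fbar σ z)
              * (4 * (Real.exp z * Real.exp (k*z)) * psi σ k z)) ) := by ring
    _ = 2 * PolyG σ z k s (Real.exp z) (Real.exp (k*z)) (Real.exp (s*z)) := by
        rw [expand_cosh, expand_sinh, expand_F, expand_Fbar, expand_psi, expand_xi,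
          expand_zeta σ k z hσ, expand_eta σ k z hσ, PolyG]
        ring

set_option maxHeartbeats 1000000 in
lemma polyG_pos (σ z k s X Y S : ℝ) (hσ0 : 0 ≤ σ) (hσ1 : σ < 1) (hz : 0 < z)
    (hk1 : -1 ≤ k) (hk2 : k ≤ 1) (hs1 : -1 ≤ s) (hs2 : s ≤ 1)
    (hX : 1 < X) (hY : 0 < Y) (hS : 0 < S) (hYX : Y ≤ X) (hSX : S ≤ X)
    (hXY : 1 ≤ X*Y) (hXS : 1 ≤ X*S) :
    0 < PolyG σ z k s X Y S := by
  have hX0 : (0:ℝ) < X := by linarith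
  have h3 : (0:ℝ) < 3 + σ := by linarith
  have hA : (0:ℝ) < σ^2+2*σ+5 := by linarith [sq_nonneg σ]
  have hB : (0:ℝ) < (1-σ)^2 := pow_pos (by linarith) 2
  have hX2 : (1:ℝ) < X^2 := by nlinarith [hX, hX0]
  have hX4 : (1:ℝ) < X^4 := by nlinarith [hX2]
  have p1 : (1:ℝ) ≤ (X*Y)^2 := by
    have := mul_le_mul hXY hXY zero_le_one (by positivity)
    nlinarith [this]
  have p2 : (1:ℝ) ≤ (X*S)^2 := by
    have := mul_le_mul hXS hXS zero_le_one (by positivity)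
    nlinarith [this]
  have p12 : (1:ℝ) ≤ (X*Y)^2*(X*S)^2 := by
    have := mul_le_mul p1 p2 zero_le_one (by positivity)
    linarith [this]
  have hX6YS : X^2 ≤ X^6*Y^2*S^2 := by
    have q : 1*(X^2) ≤ ((X*Y)^2*(X*S)^2)*(X^2) :=
      mul_le_mul_of_nonneg_right p12 (by positivity)
    nlinarith [q]
  have hYSX : Y*S ≤ X^2 := by
    have := mul_le_mul hYX hSX (le_of_lt hS) (le_of_lt hX0)
    nlinarith [this]
  have hX6 : X^2*Y^2*S^2 ≤ X^6 := by
    have q0 : (Y*S)*(Y*S) ≤ (X^2)*(X^2) :=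
      mul_le_mul hYSX hYSX (by positivity) (by positivity)
    have q : ((Y*S)*(Y*S))*(X^2) ≤ ((X^2)*(X^2))*(X^2) :=
      mul_le_mul_of_nonneg_right q0 (by positivity)
    nlinarith [q]
  -- group 1
  have hG1 : 0 ≤ (3+σ) * (σ^2+2*σ+5) * ((X^4-1)*(X^2*Y^2*S^2+X^2)) := by
    exact mul_nonneg (le_of_lt (mul_pos h3 hA))
      (mul_nonneg (by linarith) (by positivity))
  -- group 2
  have hu1 : (0:ℝ) ≤ 2-(k+s) := by linarith
  have hu2 : (0:ℝ) ≤ 2+(k+s) := by linarith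
  have hG2 : 0 ≤ (3+σ) * (1-σ)^2 * z *
      ((2-(k+s))*X^6*Y^2*S^2 + (2+(k+s))*X^6 + (2+(k+s))*X^2*Y^2*S^2 + (2-(k+s))*X^2) := by
    apply mul_nonneg (by positivity)
    have t1 : (0:ℝ) ≤ (2-(k+s))*(X^6*Y^2*S^2) := mul_nonneg hu1 (by positivity)
    have t2 : (0:ℝ) ≤ (2+(k+s))*X^6 := mul_nonneg hu2 (by positivity)
    have t3 : (0:ℝ) ≤ (2+(k+s))*(X^2*Y^2*S^2) := mul_nonneg hu2 (by positivity)
    have t4 : (0:ℝ) ≤ (2-(k+s))*X^2 := mul_nonneg hu1 (by positivity)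
    nlinarith [t1, t2, t3, t4]
  -- group 3
  have hG3 : 0 ≤ 2*(3+σ)*(1-σ)^2*z^2 *
      ((1-k)*(1-s)*(X^6*Y^2*S^2-X^2) + (1+k)*(1+s)*(X^6-X^2*Y^2*S^2)) := by
    apply mul_nonneg (by positivity)
    have t1 : (0:ℝ) ≤ (1-k)*(1-s)*(X^6*Y^2*S^2-X^2) :=
      mul_nonneg (mul_nonneg (by linarith) (by linarith)) (by linarith)
    have t2 : (0:ℝ) ≤ (1+k)*(1+s)*(X^6-X^2*Y^2*S^2) :=
      mul_nonneg (mul_nonneg (by linarith) (by linarith)) (by linarith)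
    linarith
  -- group 4 (the delicate one)
  have ht1 : z*(k-s) ≤ 2*z := by
    have := mul_le_mul_of_nonneg_left (by linarith : k-s ≤ 2) (le_of_lt hz)
    linarith [this]
  have ht2 : -(2*z) ≤ z*(k-s) := by
    have := mul_le_mul_of_nonneg_left (by linarith : -2 ≤ k-s) (le_of_lt hz)
    linarith [this]
  have hb1 : 0 < (3+σ)^2*(X^4-1)*(1-z*(k-s)) + 4*(σ^2+2*σ+5)*z*X^4 := by
    linarith [mul_nonneg (mul_nonneg (sq_nonneg (3+σ)) (by linarith : (0:ℝ) ≤ X^4-1))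
        (by linarith : (0:ℝ) ≤ 2*z - z*(k-s)),
      mul_nonneg (sq_nonneg (3+σ)) (by linarith : (0:ℝ) ≤ X^4-1),
      mul_pos (mul_pos hB hz) (by positivity : (0:ℝ) < X^4),
      mul_pos (mul_pos h3 h3) hz]
  have hb2 : 0 < (3+σ)^2*(X^4-1)*(1+z*(k-s)) + 4*(σ^2+2*σ+5)*z*X^4 := by
    linarith [mul_nonneg (mul_nonneg (sq_nonneg (3+σ)) (by linarith : (0:ℝ) ≤ X^4-1))
        (by linarith : (0:ℝ) ≤ 2*z + z*(k-s)),
      mul_nonneg (sq_nonneg (3+σ)) (by linarith : (0:ℝ) ≤ X^4-1),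
      mul_pos (mul_pos hB hz) (by positivity : (0:ℝ) < X^4),
      mul_pos (mul_pos h3 h3) hz]
  have hG4 : 0 < (1-σ) * (Y^2*((3+σ)^2*(X^4-1)*(1-z*(k-s)) + 4*(σ^2+2*σ+5)*z*X^4)
           + S^2*((3+σ)^2*(X^4-1)*(1+z*(k-s)) + 4*(σ^2+2*σ+5)*z*X^4)) := by
    apply mul_pos (by linarith)
    exact add_pos (mul_pos (by positivity) hb1) (mul_pos (by positivity) hb2)
  -- groups 5 and 6
  have hG5 : 0 ≤ 4*(1-σ)*(1-σ)^2*z^2*X^4*((2+s-k)*Y^2 + (2+k-s)*S^2) := by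
    apply mul_nonneg
    · have h1 : (0:ℝ) ≤ 4*(1-σ) := by linarith
      have h2 : (0:ℝ) ≤ z^2*X^4 := by positivity
      linarith [mul_nonneg (mul_nonneg h1 (le_of_lt hB)) h2]
    have t1 : (0:ℝ) ≤ (2+s-k)*Y^2 := mul_nonneg (by linarith) (by positivity)
    have t2 : (0:ℝ) ≤ (2+k-s)*S^2 := mul_nonneg (by linarith) (by positivity)
    linarith
  have hG6 : 0 ≤ 8*(1-σ)*(1-σ)^2*z^3*X^4*((1+s)*(1-k)*Y^2 + (1-s)*(1+k)*S^2) := by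
    apply mul_nonneg
    · have h1 : (0:ℝ) ≤ 8*(1-σ) := by linarith
      have h2 : (0:ℝ) ≤ z^3*X^4 :=
        mul_nonneg (pow_nonneg (le_of_lt hz) 3) (pow_nonneg (le_of_lt hX0) 4)
      linarith [mul_nonneg (mul_nonneg h1 (le_of_lt hB)) h2]
    have t1 : (0:ℝ) ≤ (1+s)*(1-k)*Y^2 :=
      mul_nonneg (mul_nonneg (by linarith) (by linarith)) (by positivity)
    have t2 : (0:ℝ) ≤ (1-s)*(1+k)*S^2 :=
      mul_nonneg (mul_nonneg (by linarith) (by linarith)) (by positivity)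
    linarith
  rw [PolyG]
  linarith

/-- For fixed σ ∈ [0,1), exp(−z)·g(s,k,z) > 0 (equivalently g(s,k,z) > 0) for all
z > 0 and all k, s ∈ [−1,1]. -/
theorem exp_mul_g_pos (σ : ℝ) (hσ0 : 0 ≤ σ) (hσ1 : σ < 1) :
    ∀ z : ℝ, 0 < z → ∀ k ∈ Set.Icc (-1 : ℝ) 1, ∀ s ∈ Set.Icc (-1 : ℝ) 1,
      0 < Real.exp (-z) * g σ s k z := by
  intro z hz k hk s hs
  obtain ⟨hk1, hk2⟩ := hk
  obtain ⟨hs1, hs2⟩ := hs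
  have hsinh : 2*z < Real.sinh (2*z) := Real.self_lt_sinh_iff.mpr (by linarith)
  have hFpos : 0 < F σ z := by rw [F]; nlinarith
  have hFbpos : 0 < Fbar σ z := by
    rw [Fbar]; nlinarith [Real.sinh_pos_iff.mpr (by linarith : (0:ℝ) < 2*z)]
  have hX : 1 < Real.exp z := by
    have h := Real.exp_lt_exp.mpr hz
    rwa [Real.exp_zero] at h
  have hY : 0 < Real.exp (k*z) := Real.exp_pos _
  have hS : 0 < Real.exp (s*z) := Real.exp_pos _
  have hYX : Real.exp (k*z) ≤ Real.exp z := Real.exp_le_exp.mpr (by nlinarith)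
  have hSX : Real.exp (s*z) ≤ Real.exp z := Real.exp_le_exp.mpr (by nlinarith)
  have hXY : 1 ≤ Real.exp z * Real.exp (k*z) := by
    rw [← Real.exp_add]
    have h := Real.exp_le_exp.mpr (by nlinarith : (0:ℝ) ≤ z + k*z)
    rwa [Real.exp_zero] at h
  have hXS : 1 ≤ Real.exp z * Real.exp (s*z) := by
    rw [← Real.exp_add]
    have h := Real.exp_le_exp.mpr (by nlinarith : (0:ℝ) ≤ z + s*z)
    rwa [Real.exp_zero] at h
  have hkey := key_identity σ s k z (by linarith) (ne_of_gt hFpos) (ne_of_gt hFbpos)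
  have hpoly := polyG_pos σ z k s (Real.exp z) (Real.exp (k*z)) (Real.exp (s*z))
    hσ0 hσ1 hz hk1 hk2 hs1 hs2 hX hY hS hYX hSX hXY hXS
  have hC : 0 < (1-σ) * F σ z * Fbar σ z
      * (16 * Real.exp z ^ 3 * Real.exp (k*z) * Real.exp (s*z)) :=
    mul_pos (mul_pos (mul_pos (by linarith) hFpos) hFbpos) (by positivity)
  have hg : 0 < g σ s k z := by
    by_contra hle
    push_neg at hle
    nlinarith [mul_nonneg (le_of_lt hC) (neg_nonneg.mpr hle)]
  exact mul_pos (Real.exp_pos _) hg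
end
end

section
/- Fix a real number σ with 0 ≤ σ < 1. Then for every z > 0 and every k ∈ [−1,1] one has ψ(k,z)/F(z) + ξ(k,z)/F̄(z) > 0 and ψ(k,z)/F(z) − ξ(k,z)/F̄(z) > 0. -/
noncomputable section

open Real

lemma psi_add_xi (σ k z : ℝ) :
    psi σ k z + xi σ k z =
      Real.exp ((1 + k) * z) * ((1 - σ) * (1 / 2 + z - k * z))
        + ((3 + σ) / 2) * Real.exp (-((1 + k) * z)) := by
  simp only [psi, xi, Real.cosh_eq, Real.sinh_eq]
  have h1 : Real.exp ((1 + k) * z) = Real.exp z * Real.exp (k * z) := by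
    rw [← Real.exp_add]; ring_nf
  have h2 : Real.exp (-((1 + k) * z)) = Real.exp (-z) * Real.exp (-(k * z)) := by
    rw [← Real.exp_add]; ring_nf
  have h3 : Real.exp (-(k * z)) = 1 / Real.exp (k * z) := by
    rw [Real.exp_neg]; ring
  have h4 : Real.exp (-z) = 1 / Real.exp z := by rw [Real.exp_neg]; ring
  rw [h1, h2, h3, h4]
  have e1 := Real.exp_ne_zero (k * z)
  have e2 := Real.exp_ne_zero z
  field_simp
  ring

lemma psi_sub_xi (σ k z : ℝ) :
    psi σ k z - xi σ k z =
      Real.exp ((1 - k) * z) * ((1 - σ) * (1 / 2 + z + k * z))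
        + ((3 + σ) / 2) * Real.exp (-((1 - k) * z)) := by
  simp only [psi, xi, Real.cosh_eq, Real.sinh_eq]
  have h1 : Real.exp ((1 - k) * z) = Real.exp z * Real.exp (-(k * z)) := by
    rw [← Real.exp_add]; ring_nf
  have h2 : Real.exp (-((1 - k) * z)) = Real.exp (-z) * Real.exp (k * z) := by
    rw [← Real.exp_add]; ring_nf
  have h3 : Real.exp (-(k * z)) = 1 / Real.exp (k * z) := by
    rw [Real.exp_neg]; ring
  have h4 : Real.exp (-z) = 1 / Real.exp z := by rw [Real.exp_neg]; ring
  rw [h1, h2, h3, h4]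
  have e1 := Real.exp_ne_zero (k * z)
  have e2 := Real.exp_ne_zero z
  field_simp
  ring

/-- Lemma 4.3: for σ ∈ [0,1), z > 0 and k ∈ [−1,1],
ψ(k,z)/F(z) ± ξ(k,z)/F̄(z) > 0. -/
theorem psi_xi_quotient_pos (σ : ℝ) (hσ0 : 0 ≤ σ) (hσ1 : σ < 1) :
    ∀ z : ℝ, 0 < z → ∀ k ∈ Set.Icc (-1 : ℝ) 1,
      0 < psi σ k z / F σ z + xi σ k z / Fbar σ z ∧
      0 < psi σ k z / F σ z - xi σ k z / Fbar σ z := by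
  intro z hz k hk
  obtain ⟨hk1, hk2⟩ := hk
  have hs2z : 2 * z < Real.sinh (2 * z) := Real.self_lt_sinh_iff.2 (by linarith)
  have hF : 0 < F σ z := by unfold F; nlinarith
  have hFbar : 0 < Fbar σ z := by unfold Fbar; nlinarith
  have hFle : F σ z ≤ Fbar σ z := by unfold F Fbar; nlinarith
  have hps : 0 < psi σ k z + xi σ k z := by
    rw [psi_add_xi]
    have h1 : 0 < Real.exp ((1 + k) * z) := Real.exp_pos _
    have h2 : 0 < Real.exp (-((1 + k) * z)) := Real.exp_pos _
    have h3 : 0 < (1 - σ) * (1 / 2 + z - k * z) := by nlinarith [mul_nonneg (by linarith : (0:ℝ) ≤ 1 - k) hz.le]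
    positivity
  have hms : 0 < psi σ k z - xi σ k z := by
    rw [psi_sub_xi]
    have h1 : 0 < Real.exp ((1 - k) * z) := Real.exp_pos _
    have h2 : 0 < Real.exp (-((1 - k) * z)) := Real.exp_pos _
    have h3 : 0 < (1 - σ) * (1 / 2 + z + k * z) := by nlinarith [mul_nonneg (by linarith : (0:ℝ) ≤ 1 + k) hz.le]
    positivity
  have hpsi : 0 ≤ psi σ k z := by linarith
  have hmono : psi σ k z / Fbar σ z ≤ psi σ k z / F σ z :=
    div_le_div_of_nonneg_left hpsi hF hFle
  constructor
  · have : 0 < (psi σ k z + xi σ k z) / Fbar σ z := div_pos hps hFbar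
    rw [add_div] at this
    linarith
  · have : 0 < (psi σ k z - xi σ k z) / Fbar σ z := div_pos hms hFbar
    rw [sub_div] at this
    linarith
end
end

section
/- Fix a real number σ with 0 ≤ σ < 1. Then for every z > 0 and every k ∈ [−1,1] one has: (i) ψ(k,z) > 0; (ii) ψ(k,z) + ξ(k,z) = (2+(1−σ)(1−k)z)·cosh((1+k)z) + (−(1+σ)+(1−σ)(1−k)z)·sinh((1+k)z) > 0; and (iii) ψ(k,z) − ξ(k,z) = (2+(1−σ)(1+k)z)·cosh((1−k)z) + (−(1+σ)+(1−σ)(1+k)z)·sinh((1−k)z) > 0. -/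
noncomputable section

open Real

lemma aux_pos (σ : ℝ) (hσ0 : 0 ≤ σ) (hσ1 : σ < 1) (t w : ℝ) (ht : 0 ≤ t) (hw : 0 ≤ w) :
    0 < (2 + (1 - σ) * w) * Real.cosh t + (-(1 + σ) + (1 - σ) * w) * Real.sinh t := by
  have h1 := Real.cosh_pos t
  have h2 := Real.sinh_nonneg_iff.2 ht
  have h3 := Real.sinh_lt_cosh t
  nlinarith [mul_nonneg (mul_nonneg (by linarith : (0:ℝ) ≤ 1 - σ) hw) h2,
    mul_nonneg (mul_nonneg (by linarith : (0:ℝ) ≤ 1 - σ) hw) h1.le,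
    mul_pos (by linarith : (0:ℝ) < 1 + σ) (by linarith : 0 < Real.cosh t - Real.sinh t)]

/-- For σ ∈ [0,1), z > 0 and k ∈ [−1,1]: ψ(k,z) > 0, and the sums/differences
ψ ± ξ have the stated closed forms and are positive. -/
theorem psi_pos_and_sum_diff (σ : ℝ) (hσ0 : 0 ≤ σ) (hσ1 : σ < 1) :
    ∀ z : ℝ, 0 < z → ∀ k ∈ Set.Icc (-1 : ℝ) 1,
      0 < psi σ k z ∧
      (psi σ k z + xi σ k z =
        (2 + (1 - σ) * (1 - k) * z) * Real.cosh ((1 + k) * z)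
          + (-(1 + σ) + (1 - σ) * (1 - k) * z) * Real.sinh ((1 + k) * z) ∧
        0 < psi σ k z + xi σ k z) ∧
      (psi σ k z - xi σ k z =
        (2 + (1 - σ) * (1 + k) * z) * Real.cosh ((1 - k) * z)
          + (-(1 + σ) + (1 - σ) * (1 + k) * z) * Real.sinh ((1 - k) * z) ∧
        0 < psi σ k z - xi σ k z) := by
  intro z hz k hk
  obtain ⟨hk1, hk2⟩ := hk
  have e1 : (1 + k) * z = z + k * z := by ring
  have e2 : (1 - k) * z = z - k * z := by ring
  have hsum : psi σ k z + xi σ k z =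
      (2 + (1 - σ) * (1 - k) * z) * Real.cosh ((1 + k) * z)
        + (-(1 + σ) + (1 - σ) * (1 - k) * z) * Real.sinh ((1 + k) * z) := by
    rw [e1, Real.cosh_add, Real.sinh_add]
    simp only [psi, xi]; ring
  have hdiff : psi σ k z - xi σ k z =
      (2 + (1 - σ) * (1 + k) * z) * Real.cosh ((1 - k) * z)
        + (-(1 + σ) + (1 - σ) * (1 + k) * z) * Real.sinh ((1 - k) * z) := by
    rw [e2, Real.cosh_sub, Real.sinh_sub]
    simp only [psi, xi]; ring
  have hsp : 0 < psi σ k z + xi σ k z := by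
    rw [hsum]
    have := aux_pos σ hσ0 hσ1 ((1 + k) * z) ((1 - k) * z)
      (by nlinarith) (by nlinarith)
    linear_combination this
  have hdp : 0 < psi σ k z - xi σ k z := by
    rw [hdiff]
    have := aux_pos σ hσ0 hσ1 ((1 - k) * z) ((1 + k) * z)
      (by nlinarith) (by nlinarith)
    linear_combination this
  exact ⟨by linarith, ⟨hsum, hsp⟩, hdiff, hdp⟩
end
end

section
/- Fix a real number σ with 0 ≤ σ < 1 and let k ∈ [−1,1]. Then the functions z ↦ ζ(k,z)/F(z) + η(k,z)/F̄(z) and z ↦ ζ(k,z)/F(z) − η(k,z)/F̄(z) have strictly negative derivative at every z > 0; in particular both functions are strictly decreasing on (0,∞). -/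
noncomputable section

open Real

/-! ### Auxiliary machinery for the proof -/

/-- derivative of `F`. -/
def Fd (σ z : ℝ) : ℝ := (3 + σ) / 2 * (Real.cosh (2 * z) * 2) - (1 - σ)

/-- derivative of `Fbar`. -/
def Fbd (σ z : ℝ) : ℝ := (3 + σ) / 2 * (Real.cosh (2 * z) * 2) + (1 - σ)

/-- derivative of `zeta` in `z`. -/
def Zd (σ k z : ℝ) : ℝ :=
  -(1 + σ) * Real.cosh (k * z) * Real.cosh z
    + (4 / (1 - σ) - (1 + σ) * z) * (k * Real.sinh (k * z) * Real.cosh z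
        + Real.cosh (k * z) * Real.sinh z)
    + 2 * Real.cosh (k * z) * Real.sinh z
    + ((1 + σ) ^ 2 / (1 - σ) + 2 * z) * (k * Real.sinh (k * z) * Real.sinh z
        + Real.cosh (k * z) * Real.cosh z)
    - 2 * k * Real.sinh (k * z) * Real.cosh z
    - 2 * k * z * (k * Real.cosh (k * z) * Real.cosh z + Real.sinh (k * z) * Real.sinh z)
    + (1 + σ) * k * Real.sinh (k * z) * Real.sinh z
    + (1 + σ) * k * z * (k * Real.cosh (k * z) * Real.sinh z + Real.sinh (k * z) * Real.cosh z)

/-- derivative of `eta` in `z`. -/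
def Ed (σ k z : ℝ) : ℝ :=
  (1 + σ) * k * Real.cosh (k * z) * Real.cosh z
    + (1 + σ) * k * z * (k * Real.sinh (k * z) * Real.cosh z + Real.cosh (k * z) * Real.sinh z)
    - 2 * k * Real.cosh (k * z) * Real.sinh z
    - 2 * k * z * (k * Real.sinh (k * z) * Real.sinh z + Real.cosh (k * z) * Real.cosh z)
    + 2 * Real.sinh (k * z) * Real.cosh z
    + ((1 + σ) ^ 2 / (1 - σ) + 2 * z) * (k * Real.cosh (k * z) * Real.cosh z
        + Real.sinh (k * z) * Real.sinh z)
    - (1 + σ) * Real.sinh (k * z) * Real.sinh z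
    + (4 / (1 - σ) - (1 + σ) * z) * (k * Real.cosh (k * z) * Real.sinh z
        + Real.sinh (k * z) * Real.cosh z)

/-- The key polynomial expression controlling `M₁ + M₂`. -/
def Ebig (σ k z u v : ℝ) : ℝ :=
  (-(1 / 2 * ((1 - k) * ((1 + σ) * (3 + σ)))) - z / 8 * ((1 - k) ^ 2 * ((1 - σ) ^ 2 * (3 + σ)))) * (u * v)
    + z / 8 * ((1 - k) ^ 2 * ((1 - σ) * (3 + σ) ^ 2))
    + (-(1 / 2 * ((3 + k) * ((1 + σ) * (3 + σ)))) + z / 8 * ((1 - k) ^ 2 * ((1 - σ) ^ 2 * (3 + σ)))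
        - z ^ 2 / 2 * ((1 - k ^ 2) * ((1 - σ) ^ 2 * (3 + σ)))) * u
    + (-(2 * (1 - σ ^ 2)) + z / 8 * ((1 - k) * ((1 - σ) * ((1 + k) * (3 + σ) ^ 2 - 2 * (1 - σ) ^ 2)))
        - z ^ 2 / 2 * ((1 - k ^ 2) * (1 - σ) ^ 3)) * v

lemma hd_mul (c z : ℝ) : HasDerivAt (fun t : ℝ => c * t) c z := by
  simpa using (hasDerivAt_id z).const_mul c

lemma hd_coshk (k z : ℝ) :
    HasDerivAt (fun t : ℝ => Real.cosh (k * t)) (k * Real.sinh (k * z)) z := by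
  simpa [mul_comm] using (hd_mul k z).cosh

lemma hd_sinhk (k z : ℝ) :
    HasDerivAt (fun t : ℝ => Real.sinh (k * t)) (k * Real.cosh (k * z)) z := by
  simpa [mul_comm] using (hd_mul k z).sinh

lemma hasDerivAt_F (σ z : ℝ) : HasDerivAt (fun t => F σ t) (Fd σ z) z := by
  have := (((hd_mul 2 z).sinh).const_mul ((3 + σ) / 2)).sub (hd_mul (1 - σ) z)
  simp only [F, Fd]
  exact this

lemma hasDerivAt_Fbar (σ z : ℝ) : HasDerivAt (fun t => Fbar σ t) (Fbd σ z) z := by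
  have := (((hd_mul 2 z).sinh).const_mul ((3 + σ) / 2)).add (hd_mul (1 - σ) z)
  simp only [Fbar, Fbd]
  exact this

lemma hasDerivAt_zeta (σ k z : ℝ) :
    HasDerivAt (fun t => zeta σ k t) (Zd σ k z) z := by
  have ha : HasDerivAt (fun t : ℝ => 4 / (1 - σ) - (1 + σ) * t) (0 - (1 + σ)) z :=
    (hasDerivAt_const z (4 / (1 - σ))).sub (hd_mul (1 + σ) z)
  have hb : HasDerivAt (fun t : ℝ => (1 + σ) ^ 2 / (1 - σ) + 2 * t) (0 + 2) z :=
    (hasDerivAt_const z ((1 + σ) ^ 2 / (1 - σ))).add (hd_mul 2 z)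
  have h1 := (ha.mul (hd_coshk k z)).mul (Real.hasDerivAt_cosh z)
  have h2 := (hb.mul (hd_coshk k z)).mul (Real.hasDerivAt_sinh z)
  have h3 := ((hd_mul (2 * k) z).mul (hd_sinhk k z)).mul (Real.hasDerivAt_cosh z)
  have h4 := ((hd_mul ((1 + σ) * k) z).mul (hd_sinhk k z)).mul (Real.hasDerivAt_sinh z)
  have H := ((h1.add h2).sub h3).add h4
  simp only [zeta, Zd]
  refine H.congr_deriv ?_
  simp only [Pi.mul_apply]
  ring

lemma hasDerivAt_eta (σ k z : ℝ) :
    HasDerivAt (fun t => eta σ k t) (Ed σ k z) z := by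
  have hb : HasDerivAt (fun t : ℝ => (1 + σ) ^ 2 / (1 - σ) + 2 * t) (0 + 2) z :=
    (hasDerivAt_const z ((1 + σ) ^ 2 / (1 - σ))).add (hd_mul 2 z)
  have ha : HasDerivAt (fun t : ℝ => 4 / (1 - σ) - (1 + σ) * t) (0 - (1 + σ)) z :=
    (hasDerivAt_const z (4 / (1 - σ))).sub (hd_mul (1 + σ) z)
  have h1 := ((hd_mul ((1 + σ) * k) z).mul (hd_coshk k z)).mul (Real.hasDerivAt_cosh z)
  have h2 := ((hd_mul (2 * k) z).mul (hd_coshk k z)).mul (Real.hasDerivAt_sinh z)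
  have h3 := (hb.mul (hd_sinhk k z)).mul (Real.hasDerivAt_cosh z)
  have h4 := (ha.mul (hd_sinhk k z)).mul (Real.hasDerivAt_sinh z)
  have H := ((h1.sub h2).add h3).add h4
  simp only [eta, Ed]
  refine H.congr_deriv ?_
  simp only [Pi.mul_apply]
  ring

lemma F_pos {σ z : ℝ} (hσ0 : 0 ≤ σ) (hz : 0 < z) : 0 < F σ z := by
  have h : 2 * z < Real.sinh (2 * z) := Real.self_lt_sinh_iff.mpr (by linarith)
  have h2 : (0:ℝ) ≤ (3 + σ) / 2 := by linarith
  unfold F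
  nlinarith [mul_nonneg h2 (by linarith : (0:ℝ) ≤ Real.sinh (2 * z) - 2 * z)]

lemma Fbar_pos {σ z : ℝ} (hσ0 : 0 ≤ σ) (hσ1 : σ < 1) (hz : 0 < z) : 0 < Fbar σ z := by
  have h : 2 * z < Real.sinh (2 * z) := Real.self_lt_sinh_iff.mpr (by linarith)
  have h2 : (0:ℝ) ≤ (3 + σ) / 2 := by linarith
  unfold Fbar
  nlinarith [mul_nonneg h2 (by linarith : (0:ℝ) ≤ Real.sinh (2 * z) - 2 * z),
    mul_nonneg (by linarith : (0:ℝ) ≤ 1 - σ) hz.le]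

lemma F_le_Fbar {σ z : ℝ} (hσ1 : σ < 1) (hz : 0 < z) : F σ z ≤ Fbar σ z := by
  unfold F Fbar
  nlinarith [mul_nonneg (by linarith : (0:ℝ) ≤ 1 - σ) hz.le]

set_option maxHeartbeats 2000000 in
lemma core_poly (σ k z u v : ℝ) (hσ0 : 0 ≤ σ) (hσ1 : σ < 1)
    (hk1 : -1 ≤ k) (hk2 : k ≤ 1) (hz : 0 < z)
    (hu : 1 + 2 * (1 + k) * z ≤ u) (hv : 1 + 4 * z ≤ v) :
    Ebig σ k z u v < 0 := by
  have h3σ : (0:ℝ) < 3 + σ := by linarith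
  have h1σ : (0:ℝ) < 1 - σ := by linarith
  have h1k : (0:ℝ) ≤ 1 - k := by linarith
  have h1k' : (0:ℝ) ≤ 1 + k := by linarith
  have hzk : (0:ℝ) ≤ 2 * (1 + k) * z := by positivity
  have hu0 : (0:ℝ) < u := by linarith
  have hv0 : (0:ℝ) < v := by linarith
  have hu1 : (1:ℝ) ≤ u := by linarith
  have hv1 : (1:ℝ) ≤ v := by linarith
  have hb : (0:ℝ) ≤ z / 8 * ((1 - k) ^ 2 * ((1 - σ) ^ 2 * (3 + σ))) := by
    have h1 := mul_nonneg (sq_nonneg (1 - σ)) h3σ.le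
    have h2 := mul_nonneg (sq_nonneg (1 - k)) h1
    exact mul_nonneg (by linarith : (0:ℝ) ≤ z / 8) h2
  have c1 : z / 8 * ((1 - k) ^ 2 * ((1 - σ) ^ 2 * (3 + σ))) * u
      ≤ z / 8 * ((1 - k) ^ 2 * ((1 - σ) ^ 2 * (3 + σ))) * (u * v) := by
    nlinarith [mul_nonneg (mul_nonneg hb hu0.le) (by linarith : (0:ℝ) ≤ v - 1)]
  have hk4 : (1 - k) ^ 2 ≤ 4 := by nlinarith
  have hs16 : (3 + σ) ^ 2 ≤ 16 := by nlinarith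
  have c2 : z / 8 * ((1 - k) ^ 2 * ((1 - σ) * (3 + σ) ^ 2)) ≤ 2 * (1 - σ ^ 2) * v := by
    have hin : (1 - k) ^ 2 * (3 + σ) ^ 2 ≤ 64 := by
      nlinarith [mul_le_mul hk4 hs16 (sq_nonneg (3 + σ)) (by norm_num : (0:ℝ) ≤ 4)]
    have H1 : (0:ℝ) ≤ z * (1 - σ) * (64 - (1 - k) ^ 2 * (3 + σ) ^ 2) :=
      mul_nonneg (mul_nonneg hz.le h1σ.le) (by linarith)
    have H2 : (0:ℝ) ≤ (1 - σ) * (v - (1 + 4 * z)) := mul_nonneg h1σ.le (by linarith)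
    have H3 : (0:ℝ) ≤ σ * (1 - σ) * v := mul_nonneg (mul_nonneg hσ0 h1σ.le) hv0.le
    nlinarith [H1, H2, H3]
  have ha0 : (0:ℝ) ≤ 1 / 2 * ((1 - k) * ((1 + σ) * (3 + σ))) := by
    have h1 := mul_nonneg (by linarith : (0:ℝ) ≤ 1 + σ) h3σ.le
    have h2 := mul_nonneg h1k h1
    linarith
  have hinner : z / 8 * ((1 + k) * ((1 - σ) * (3 + σ)))
      ≤ 1 / 2 * ((1 + σ) * (1 + 2 * (1 + k) * z)) := by
    have H3 : (0:ℝ) ≤ z * (1 + k) := mul_nonneg hz.le h1k'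
    have H4 : (0:ℝ) ≤ z * (1 + k) * σ := mul_nonneg H3 hσ0
    have H5 : (0:ℝ) ≤ z * (1 + k) * σ ^ 2 := mul_nonneg H3 (sq_nonneg σ)
    linarith [H3, H4, H5]
  have h1k3σ : (0:ℝ) ≤ (1 - k) * (3 + σ) := mul_nonneg h1k h3σ.le
  have hmul := mul_le_mul_of_nonneg_left hinner h1k3σ
  have hwcoef : z / 8 * ((1 - k) * ((1 - σ) * ((1 + k) * (3 + σ) ^ 2 - 2 * (1 - σ) ^ 2)))
      ≤ (1 - k) * (3 + σ) * (z / 8 * ((1 + k) * ((1 - σ) * (3 + σ)))) := by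
    have H3 : (0:ℝ) ≤ z / 8 * ((1 - k) * ((1 - σ) * (2 * (1 - σ) ^ 2))) := by
      have h1 := mul_nonneg h1σ.le (by positivity : (0:ℝ) ≤ 2 * (1 - σ) ^ 2)
      have h2 := mul_nonneg h1k h1
      exact mul_nonneg (by linarith : (0:ℝ) ≤ z / 8) h2
    nlinarith [H3]
  have c3 : (-(2 * (1 - σ ^ 2)) + z / 8 * ((1 - k) * ((1 - σ) * ((1 + k) * (3 + σ) ^ 2 - 2 * (1 - σ) ^ 2)))
        - z ^ 2 / 2 * ((1 - k ^ 2) * (1 - σ) ^ 3)) * v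
      ≤ -(2 * (1 - σ ^ 2)) * v + 1 / 2 * ((1 - k) * ((1 + σ) * (3 + σ))) * (u * v) := by
    have hw_le : z / 8 * ((1 - k) * ((1 - σ) * ((1 + k) * (3 + σ) ^ 2 - 2 * (1 - σ) ^ 2)))
        ≤ 1 / 2 * ((1 - k) * ((1 + σ) * (3 + σ))) * (1 + 2 * (1 + k) * z) := by
      nlinarith [hwcoef, hmul]
    have hq : (0:ℝ) ≤ z ^ 2 / 2 * ((1 - k ^ 2) * (1 - σ) ^ 3) := by
      have h1 : (0:ℝ) ≤ 1 - k ^ 2 := by nlinarith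
      have h2 := mul_nonneg h1 (by positivity : (0:ℝ) ≤ (1 - σ) ^ 3)
      positivity
    have P1 : (0:ℝ) ≤ 1 / 2 * ((1 - k) * ((1 + σ) * (3 + σ))) * (v * (u - (1 + 2 * (1 + k) * z))) :=
      mul_nonneg ha0 (mul_nonneg hv0.le (by linarith))
    nlinarith [mul_le_mul_of_nonneg_right hw_le hv0.le, P1, mul_nonneg hq hv0.le]
  have hc3 : (3:ℝ) ≤ 1 / 2 * ((3 + k) * ((1 + σ) * (3 + σ))) := by
    have h3k : (0:ℝ) ≤ 3 + k := by linarith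
    nlinarith [mul_nonneg hσ0 h3k, mul_nonneg (sq_nonneg σ) h3k]
  have c4 : (3:ℝ) ≤ 1 / 2 * ((3 + k) * ((1 + σ) * (3 + σ))) * u := by
    nlinarith [mul_nonneg (by linarith : (0:ℝ) ≤ 1 / 2 * ((3 + k) * ((1 + σ) * (3 + σ)))) (by linarith : (0:ℝ) ≤ u - 1)]
  have c5 : (0:ℝ) ≤ z ^ 2 / 2 * ((1 - k ^ 2) * ((1 - σ) ^ 2 * (3 + σ))) * u := by
    have h1 : (0:ℝ) ≤ 1 - k ^ 2 := by nlinarith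
    have h2 := mul_nonneg (sq_nonneg (1 - σ)) h3σ.le
    have h3 := mul_nonneg h1 h2
    have h4 := mul_nonneg (mul_nonneg (by positivity : (0:ℝ) ≤ z ^ 2 / 2) h3) hu0.le
    linarith
  unfold Ebig
  linarith [c1, c2, c3, c4, c5]

set_option maxHeartbeats 2000000 in
lemma key_identity_s10 (σ k z : ℝ) (hσ1 : σ < 1) :
    (1 - σ) * ((Zd σ k z * F σ z - zeta σ k z * Fd σ z)
        + (Ed σ k z * Fbar σ z - eta σ k z * Fbd σ z)) * (Real.exp z ^ 3 * Real.exp (k * z))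
      = Ebig σ k z (Real.exp (k * z) ^ 2 * Real.exp z ^ 2) (Real.exp z ^ 4) := by
  have hs : (1 : ℝ) - σ ≠ 0 := by intro h; linarith [h]
  have hez := Real.exp_ne_zero z
  have hekz := Real.exp_ne_zero (k * z)
  have h2z : Real.exp (2 * z) = Real.exp z * Real.exp z := by
    rw [← Real.exp_add]; ring_nf
  simp only [Zd, Ed, zeta, eta, F, Fbar, Fd, Fbd, Ebig, Real.cosh_eq, Real.sinh_eq,
    Real.exp_neg, h2z]
  field_simp
  ring

lemma Msum_neg (σ k z : ℝ) (hσ0 : 0 ≤ σ) (hσ1 : σ < 1)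
    (hk1 : -1 ≤ k) (hk2 : k ≤ 1) (hz : 0 < z) :
    (Zd σ k z * F σ z - zeta σ k z * Fd σ z)
      + (Ed σ k z * Fbar σ z - eta σ k z * Fbd σ z) < 0 := by
  have hu : 1 + 2 * (1 + k) * z ≤ Real.exp (k * z) ^ 2 * Real.exp z ^ 2 := by
    have h := Real.add_one_le_exp (2 * (1 + k) * z)
    have e : Real.exp (2 * (1 + k) * z) = Real.exp (k * z) ^ 2 * Real.exp z ^ 2 := by
      rw [show 2 * (1 + k) * z = k * z + k * z + (z + z) by ring, Real.exp_add, Real.exp_add,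
        Real.exp_add]
      ring
    rw [e] at h; linarith
  have hv : 1 + 4 * z ≤ Real.exp z ^ 4 := by
    have h := Real.add_one_le_exp (4 * z)
    have e : Real.exp (4 * z) = Real.exp z ^ 4 := by
      rw [show (4:ℝ) * z = z + z + (z + z) by ring, Real.exp_add, Real.exp_add]
      ring
    rw [e] at h; linarith
  have hcore := core_poly σ k z (Real.exp (k * z) ^ 2 * Real.exp z ^ 2) (Real.exp z ^ 4)
    hσ0 hσ1 hk1 hk2 hz hu hv
  rw [← key_identity_s10 σ k z hσ1] at hcore
  by_contra hcon
  push_neg at hcon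
  have hp : (0:ℝ) < Real.exp z ^ 3 * Real.exp (k * z) :=
    mul_pos (pow_pos (Real.exp_pos z) 3) (Real.exp_pos (k * z))
  nlinarith [mul_nonneg (mul_nonneg (by linarith : (0:ℝ) ≤ 1 - σ) hcon) hp.le]

lemma zeta_negk (σ k z : ℝ) : zeta σ (-k) z = zeta σ k z := by
  unfold zeta
  simp only [neg_mul, Real.cosh_neg, Real.sinh_neg]
  ring

lemma eta_negk (σ k z : ℝ) : eta σ (-k) z = -eta σ k z := by
  unfold eta
  simp only [neg_mul, Real.cosh_neg, Real.sinh_neg]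
  ring

lemma Zd_negk (σ k z : ℝ) : Zd σ (-k) z = Zd σ k z := by
  unfold Zd
  simp only [neg_mul, Real.cosh_neg, Real.sinh_neg]
  ring

lemma Ed_negk (σ k z : ℝ) : Ed σ (-k) z = -Ed σ k z := by
  unfold Ed
  simp only [neg_mul, Real.cosh_neg, Real.sinh_neg]
  ring

lemma Mdiff_neg (σ k z : ℝ) (hσ0 : 0 ≤ σ) (hσ1 : σ < 1)
    (hk1 : -1 ≤ k) (hk2 : k ≤ 1) (hz : 0 < z) :
    (Zd σ k z * F σ z - zeta σ k z * Fd σ z)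
      - (Ed σ k z * Fbar σ z - eta σ k z * Fbd σ z) < 0 := by
  have h := Msum_neg σ (-k) z hσ0 hσ1 (by linarith) (by linarith) hz
  rw [zeta_negk, eta_negk, Zd_negk, Ed_negk] at h
  linarith

lemma hasDerivAt_plusfun (σ k z : ℝ) (hσ0 : 0 ≤ σ) (hσ1 : σ < 1) (hz : 0 < z) :
    HasDerivAt (fun t : ℝ => zeta σ k t / F σ t + eta σ k t / Fbar σ t)
      ((Zd σ k z * F σ z - zeta σ k z * Fd σ z) / F σ z ^ 2
        + (Ed σ k z * Fbar σ z - eta σ k z * Fbd σ z) / Fbar σ z ^ 2) z :=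
  ((hasDerivAt_zeta σ k z).div (hasDerivAt_F σ z) (F_pos hσ0 hz).ne').add
    ((hasDerivAt_eta σ k z).div (hasDerivAt_Fbar σ z) (Fbar_pos hσ0 hσ1 hz).ne')

lemma deriv_plusfun_neg (σ k z : ℝ) (hσ0 : 0 ≤ σ) (hσ1 : σ < 1)
    (hk1 : -1 ≤ k) (hk2 : k ≤ 1) (hz : 0 < z) :
    deriv (fun t : ℝ => zeta σ k t / F σ t + eta σ k t / Fbar σ t) z < 0 := by
  rw [(hasDerivAt_plusfun σ k z hσ0 hσ1 hz).deriv]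
  have hF := F_pos hσ0 hz (σ := σ)
  have hFb := Fbar_pos hσ0 hσ1 hz (σ := σ)
  have hle := F_le_Fbar hσ1 hz (σ := σ)
  have hsum := Msum_neg σ k z hσ0 hσ1 hk1 hk2 hz
  have hdiff := Mdiff_neg σ k z hσ0 hσ1 hk1 hk2 hz
  have hM1 : Zd σ k z * F σ z - zeta σ k z * Fd σ z < 0 := by linarith
  have h1 : (Zd σ k z * F σ z - zeta σ k z * Fd σ z) / F σ z ^ 2
      ≤ (Zd σ k z * F σ z - zeta σ k z * Fd σ z) / Fbar σ z ^ 2 := by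
    rw [div_le_div_iff₀ (by positivity) (by positivity)]
    nlinarith [mul_nonneg (neg_nonneg.mpr hM1.le)
      (by nlinarith : (0:ℝ) ≤ Fbar σ z ^ 2 - F σ z ^ 2)]
  have h2 : (Zd σ k z * F σ z - zeta σ k z * Fd σ z) / Fbar σ z ^ 2
      + (Ed σ k z * Fbar σ z - eta σ k z * Fbd σ z) / Fbar σ z ^ 2 < 0 := by
    rw [← add_div]
    exact div_neg_of_neg_of_pos hsum (by positivity)
  linarith

/-- Inequality (4.6): for σ ∈ [0,1) and k ∈ [−1,1], the functions
z ↦ ζ/F ± η/F̄ have strictly negative derivative on (0,∞), and in particular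
are strictly decreasing there. -/
theorem zeta_eta_quotient_decreasing (σ : ℝ) (hσ0 : 0 ≤ σ) (hσ1 : σ < 1)
    (k : ℝ) (hk : k ∈ Set.Icc (-1 : ℝ) 1) :
    (∀ z : ℝ, 0 < z →
      deriv (fun t : ℝ => zeta σ k t / F σ t + eta σ k t / Fbar σ t) z < 0 ∧
      deriv (fun t : ℝ => zeta σ k t / F σ t - eta σ k t / Fbar σ t) z < 0) ∧
    StrictAntiOn (fun t : ℝ => zeta σ k t / F σ t + eta σ k t / Fbar σ t)
      (Set.Ioi 0) ∧
    StrictAntiOn (fun t : ℝ => zeta σ k t / F σ t - eta σ k t / Fbar σ t)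
      (Set.Ioi 0) := by
  obtain ⟨hk1, hk2⟩ := hk
  have hfun_eq : (fun t : ℝ => zeta σ k t / F σ t - eta σ k t / Fbar σ t)
      = (fun t : ℝ => zeta σ (-k) t / F σ t + eta σ (-k) t / Fbar σ t) := by
    funext t
    rw [zeta_negk, eta_negk]
    ring
  have hderiv_plus : ∀ z : ℝ, 0 < z →
      deriv (fun t : ℝ => zeta σ k t / F σ t + eta σ k t / Fbar σ t) z < 0 :=
    fun z hz => deriv_plusfun_neg σ k z hσ0 hσ1 hk1 hk2 hz
  have hderiv_minus : ∀ z : ℝ, 0 < z →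
      deriv (fun t : ℝ => zeta σ k t / F σ t - eta σ k t / Fbar σ t) z < 0 := by
    intro z hz
    rw [hfun_eq]
    exact deriv_plusfun_neg σ (-k) z hσ0 hσ1 (by linarith) (by linarith) hz
  refine ⟨fun z hz => ⟨hderiv_plus z hz, hderiv_minus z hz⟩, ?_, ?_⟩
  · refine strictAntiOn_of_deriv_neg (convex_Ioi 0) ?_ ?_
    · intro x hx
      exact (hasDerivAt_plusfun σ k x hσ0 hσ1 hx).continuousAt.continuousWithinAt
    · intro x hx
      rw [interior_Ioi] at hx
      exact hderiv_plus x hx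
  · refine strictAntiOn_of_deriv_neg (convex_Ioi 0) ?_ ?_
    · intro x hx
      rw [hfun_eq]
      exact (hasDerivAt_plusfun σ (-k) x hσ0 hσ1 hx).continuousAt.continuousWithinAt
    · intro x hx
      rw [interior_Ioi] at hx
      exact hderiv_minus x hx
end
end

section
/- Fix a real number σ with 0 ≤ σ < 1. Then for every z > 0 one has (2F(z) − F'(z))/F(z)² + (2F̄(z) − F̄'(z))/F̄(z)² < 0 and (2F(z) − F'(z))/F(z)² − (2F̄(z) − F̄'(z))/F̄(z)² < 0, where F'(z) = (3+σ)·cosh(2z) − (1−σ) and F̄'(z) = (3+σ)·cosh(2z) + (1−σ). -/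
noncomputable section

open Real

private lemma AF_aux_sum (σ z e S : ℝ) (hσ0 : 0 ≤ σ) (hσ1 : σ < 1) (hz : 0 < z)
    (he0 : 0 < e) (hS0 : 0 < S) (hS : 2 * z < S) (he1 : 1 - 2 * z < e) :
    (1 - σ) ^ 2 * (1 - 2 * z) * S * z
      < e * (((3 + σ) / 2 * S) ^ 2 + ((1 - σ) * z) ^ 2) := by
  have h1σ : (0:ℝ) < 1 - σ := by linarith
  rcases le_or_gt (1 - 2 * z) 0 with h | h
  · nlinarith [mul_pos he0 (mul_pos hS0 hz), sq_nonneg ((3+σ)/2*S), sq_nonneg ((1-σ)*z),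
      mul_pos he0 (pow_pos (mul_pos h1σ hz) 2),
      mul_nonneg (mul_nonneg (sq_nonneg (1-σ)) (neg_nonneg.mpr h)) (mul_pos hS0 hz).le]
  · have p1 : 0 < (1-σ)^2 := by positivity
    have p2 : 2*z*(e*S) < e*S^2 := by nlinarith [mul_pos he0 hS0]
    have p3 : (1-2*z)*(S*z) < e*(S*z) := by nlinarith [mul_pos hS0 hz]
    nlinarith [mul_lt_mul_of_pos_left p3 p1, mul_le_mul_of_nonneg_left p2.le p1.le,
      mul_nonneg (mul_nonneg hσ0 (by linarith : (0:ℝ) ≤ 3 - σ)) (mul_nonneg he0.le (sq_nonneg S)),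
      mul_nonneg (mul_nonneg p1.le h.le) (mul_pos hS0 hz).le,
      mul_nonneg he0.le (sq_nonneg ((1-σ)*z))]

private lemma AF_aux_key5 (z e S : ℝ) (hz : 0 < z) (hz12 : z < 1/2)
    (he0 : 0 < e) (hS0 : 0 < S) (hcube : (1 - 4 * z / 3) ^ 3 ≤ e ^ 2)
    (h2eS : 2 * e * S = 1 - e ^ 2) :
    5 * (1 - 2 * z) * S < 18 * e * z := by
  have h36 : 5 * (1 - 2 * z) * (1 - e ^ 2) < 36 * e ^ 2 * z := by
    have hc' := mul_le_mul_of_nonneg_left hcube (show (0:ℝ) ≤ 5 + 26 * z by linarith)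
    have hq1 : 0 ≤ z * (1 - 2*z - 11/116)^2 := mul_nonneg hz.le (sq_nonneg _)
    have hq2 : 0 ≤ z * (1 - 2*z)^3 := mul_nonneg hz.le (pow_nonneg (by linarith) 3)
    nlinarith [hz]
  nlinarith [h36, h2eS, he0, mul_pos he0 hz, mul_pos he0 hS0]

private lemma AF_aux_diff (σ z e S : ℝ) (hσ0 : 0 ≤ σ) (hσ1 : σ < 1) (hz : 0 < z)
    (he0 : 0 < e) (hS0 : 0 < S) (hS : 2 * z < S)
    (key5 : z < 1/2 → 5 * (1 - 2 * z) * S < 18 * e * z) :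
    (1 - 2 * z) * (((3 + σ) / 2 * S) ^ 2 + ((1 - σ) * z) ^ 2)
      < (3 + σ) ^ 2 * e * S * z := by
  rcases le_or_gt (1/2 : ℝ) z with h | h
  · have hrhs : 0 < (3 + σ) ^ 2 * e * S * z := by positivity
    nlinarith [hrhs, mul_nonneg (by linarith : (0:ℝ) ≤ 2*z-1)
      (add_nonneg (sq_nonneg ((3+σ)/2*S)) (sq_nonneg ((1-σ)*z)))]
  · have k5 := key5 h
    have hY : (1 - σ) * z ≤ (3 + σ) / 2 * S / 3 := by nlinarith
    have hY0 : 0 ≤ (1 - σ) * z := by nlinarith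
    have hX0 : 0 < (3 + σ) / 2 * S := by nlinarith
    have hXY : ((3 + σ) / 2 * S) ^ 2 + ((1 - σ) * z) ^ 2
        ≤ (10/9) * ((3 + σ) / 2 * S) ^ 2 := by nlinarith
    nlinarith [mul_lt_mul_of_pos_left k5 (show (0:ℝ) < (3+σ)^2 * S / 18 by positivity),
      mul_le_mul_of_nonneg_left hXY (show (0:ℝ) ≤ 1 - 2*z by linarith)]

private lemma AF_aux_final_sum (σ z e S : ℝ) (hσ0 : 0 ≤ σ)
    (key_sum : (1 - σ) ^ 2 * (1 - 2 * z) * S * z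
      < e * (((3 + σ) / 2 * S) ^ 2 + ((1 - σ) * z) ^ 2)) :
    (-(3+σ)*e + (1-σ)*(1-2*z)) * ((3 + σ) / 2 * S + (1 - σ) * z)^2
      + (-(3+σ)*e - (1-σ)*(1-2*z)) * ((3 + σ) / 2 * S - (1 - σ) * z)^2 < 0 := by
  nlinarith [mul_lt_mul_of_pos_left key_sum (show (0:ℝ) < 3 + σ by linarith)]

private lemma AF_aux_final_diff (σ z e S : ℝ) (hσ1 : σ < 1)
    (key_diff : (1 - 2 * z) * (((3 + σ) / 2 * S) ^ 2 + ((1 - σ) * z) ^ 2)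
      < (3 + σ) ^ 2 * e * S * z) :
    (-(3+σ)*e + (1-σ)*(1-2*z)) * ((3 + σ) / 2 * S + (1 - σ) * z)^2
      - (-(3+σ)*e - (1-σ)*(1-2*z)) * ((3 + σ) / 2 * S - (1 - σ) * z)^2 < 0 := by
  nlinarith [mul_lt_mul_of_pos_left key_diff (show (0:ℝ) < 1 - σ by linarith)]

/-- Lemma 6.1: for σ ∈ [0,1) and z > 0,
(2F − F')/F² ± (2F̄ − F̄')/F̄² < 0, where F' and F̄' are the derivatives of F, F̄. -/
theorem AF_F1 (σ : ℝ) (hσ0 : 0 ≤ σ) (hσ1 : σ < 1) :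
    ∀ z : ℝ, 0 < z →
      (2 * F σ z - ((3 + σ) * Real.cosh (2 * z) - (1 - σ))) / (F σ z) ^ 2
          + (2 * Fbar σ z - ((3 + σ) * Real.cosh (2 * z) + (1 - σ))) / (Fbar σ z) ^ 2
        < 0 ∧
      (2 * F σ z - ((3 + σ) * Real.cosh (2 * z) - (1 - σ))) / (F σ z) ^ 2
          - (2 * Fbar σ z - ((3 + σ) * Real.cosh (2 * z) + (1 - σ))) / (Fbar σ z) ^ 2
        < 0 := by
  intro z hz
  have hz2 : (0:ℝ) < 2 * z := by linarith
  have h1σ : (0:ℝ) < 1 - σ := by linarith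
  obtain ⟨S, hSdef⟩ : ∃ S, Real.sinh (2 * z) = S := ⟨_, rfl⟩
  obtain ⟨e, hedef⟩ : ∃ e, Real.exp (-(2 * z)) = e := ⟨_, rfl⟩
  have hS : 2 * z < S := by
    have h := Real.self_lt_sinh_iff.mpr hz2
    rw [hSdef] at h; exact h
  have hS0 : 0 < S := by linarith
  have he0 : 0 < e := by
    have h : 0 < Real.exp (-(2 * z)) := Real.exp_pos _
    rwa [hedef] at h
  have he1 : 1 - 2 * z < e := by
    have h := Real.add_one_lt_exp (x := -(2 * z)) (by linarith)
    rw [hedef] at h; linarith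
  have hCS : Real.cosh (2 * z) = S + e := by
    have h := Real.cosh_sub_sinh (2 * z)
    rw [hSdef, hedef] at h; linarith
  have h2eS : 2 * e * S = 1 - e ^ 2 := by
    rw [← hSdef, ← hedef, Real.sinh_eq]
    have h : Real.exp (-(2*z)) * Real.exp (2*z) = 1 := by
      rw [← Real.exp_add]; simp
    nlinarith [h]
  have hFval : F σ z = (3 + σ) / 2 * S - (1 - σ) * z := by
    rw [← hSdef]; rfl
  have hFbval : Fbar σ z = (3 + σ) / 2 * S + (1 - σ) * z := by
    rw [← hSdef]; rfl
  have hFpos : 0 < F σ z := by rw [hFval]; nlinarith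
  have hFbpos : 0 < Fbar σ z := by rw [hFbval]; nlinarith
  have hA : 2 * F σ z - ((3 + σ) * Real.cosh (2 * z) - (1 - σ))
      = -(3 + σ) * e + (1 - σ) * (1 - 2 * z) := by
    rw [hFval, hCS]; ring
  have hAb : 2 * Fbar σ z - ((3 + σ) * Real.cosh (2 * z) + (1 - σ))
      = -(3 + σ) * e - (1 - σ) * (1 - 2 * z) := by
    rw [hFbval, hCS]; ring
  have hF2 : (F σ z) ^ 2 ≠ 0 := by positivity
  have hFb2 : (Fbar σ z) ^ 2 ≠ 0 := by positivity
  have hdenpos : 0 < (F σ z) ^ 2 * (Fbar σ z) ^ 2 := by positivity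
  have key_sum := AF_aux_sum σ z e S hσ0 hσ1 hz he0 hS0 hS he1
  have key5 : z < 1/2 → 5 * (1 - 2 * z) * S < 18 * e * z := by
    intro hz12
    have hP : (0:ℝ) ≤ 1 - 4 * z / 3 := by linarith
    have h13 : 1 - 4 * z / 3 ≤ Real.exp (-(4 * z / 3)) := by
      have h := Real.add_one_le_exp (-(4 * z / 3)); linarith
    have hcube : (1 - 4 * z / 3) ^ 3 ≤ e ^ 2 := by
      calc (1 - 4 * z / 3) ^ 3 ≤ Real.exp (-(4 * z / 3)) ^ 3 :=
            pow_le_pow_left₀ hP h13 3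
        _ = e ^ 2 := by
            rw [← hedef, ← Real.exp_nat_mul, ← Real.exp_nat_mul]
            congr 1
            push_cast
            ring
    exact AF_aux_key5 z e S hz hz12 he0 hS0 hcube h2eS
  have key_diff := AF_aux_diff σ z e S hσ0 hσ1 hz he0 hS0 hS key5
  constructor
  · rw [div_add_div _ _ hF2 hFb2, div_neg_iff]
    right
    refine ⟨?_, hdenpos⟩
    rw [hA, hAb, hFval, hFbval]
    have h := AF_aux_final_sum σ z e S hσ0 key_sum
    linarith [h]
  · rw [div_sub_div _ _ hF2 hFb2, div_neg_iff]
    right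
    refine ⟨?_, hdenpos⟩
    rw [hA, hAb, hFval, hFbval]
    have h := AF_aux_final_diff σ z e S hσ1 key_diff
    linarith [h]
end
end

section
/- Let N ≥ 3 be an integer and let m be an integer with 3 ≤ m ≤ N. Then for all real numbers ρ, x with 0 < ρ < π/(N+1) and 0 < x < π/(N+1) one has sin(m·ρ)·sin(m·x)/m³ − sin((m+1)·ρ)·sin((m+1)·x)/(m+1)³ > sin(ρ)·sin(x)·(1/m^{3/2} − 1/(m+1)^{3/2})². -/
open Real

lemma aux_sinc {a b : ℝ} (ha : 0 < a) (hab : a < b) (hb : b ≤ Real.pi) :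
    Real.sin b * a < Real.sin a * b := by
  have hb0 : 0 < b := ha.trans hab
  have hw : a/b < 1 := (div_lt_one hb0).mpr hab
  have h := strictConcaveOn_sin_Icc.2 (Set.mem_Icc.mpr ⟨le_rfl, Real.pi_pos.le⟩)
      (Set.mem_Icc.mpr ⟨hb0.le, hb⟩) hb0.ne
      (show (0:ℝ) < 1 - a/b by linarith) (show (0:ℝ) < a/b by positivity) (by ring)
  simp only [smul_eq_mul, mul_zero, Real.sin_zero, zero_add] at h
  rw [div_mul_cancel₀ _ hb0.ne'] at h
  have h2 : a / b * Real.sin b < Real.sin a := by linarith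
  calc Real.sin b * a = (a / b * Real.sin b) * b := by field_simp
    _ < Real.sin a * b := by nlinarith

lemma aux_sin_le {a c : ℝ} (ha : 0 < a) (hac : a ≤ c) (h : a + c ≤ Real.pi) :
    Real.sin a ≤ Real.sin c := by
  rcases le_or_gt c (Real.pi/2) with hc | hc
  · exact Real.strictMonoOn_sin.monotoneOn ⟨by linarith [Real.pi_pos], by linarith⟩
      ⟨by linarith [Real.pi_pos], hc⟩ hac
  · rw [← Real.sin_pi_sub c]
    exact Real.strictMonoOn_sin.monotoneOn ⟨by linarith [Real.pi_pos], by linarith⟩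
      ⟨by linarith, by linarith⟩ (by linarith)

lemma aux_key {M : ℝ} (hM : 3 ≤ M) :
    (1 / M ^ ((3:ℝ)/2) - 1 / (M+1) ^ ((3:ℝ)/2)) ^ 2 < 1 / (M^3 * (M+1)) := by
  have hM0 : (0:ℝ) < M := by linarith
  have hM1 : (0:ℝ) < M + 1 := by linarith
  set p := Real.sqrt M with hp_def
  set q := Real.sqrt (M+1) with hq_def
  have hp : 0 < p := Real.sqrt_pos.mpr hM0
  have hq : 0 < q := Real.sqrt_pos.mpr hM1
  have hp2 : p^2 = M := Real.sq_sqrt hM0.le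
  have hq2 : q^2 = M + 1 := Real.sq_sqrt hM1.le
  have hpq : p < q := Real.sqrt_lt_sqrt hM0.le (by linarith)
  have hp3 : 3 ≤ p^2 := by rw [hp2]; exact hM
  have e1 : M ^ ((3:ℝ)/2) = p^3 := by
    rw [show ((3:ℝ)/2) = (1/2 : ℝ) * 3 by norm_num, Real.rpow_mul hM0.le,
      ← Real.sqrt_eq_rpow, show ((3:ℝ)) = ((3:ℕ):ℝ) by norm_num, Real.rpow_natCast]
  have e2 : (M+1) ^ ((3:ℝ)/2) = q^3 := by
    rw [show ((3:ℝ)/2) = (1/2 : ℝ) * 3 by norm_num, Real.rpow_mul hM1.le,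
      ← Real.sqrt_eq_rpow, show ((3:ℝ)) = ((3:ℕ):ℝ) by norm_num, Real.rpow_natCast]
  rw [e1, e2, show M^3*(M+1) = (p^2)^3 * q^2 by rw [hp2, hq2]]
  have hp1 : 1 ≤ p := by nlinarith
  have hq2' : 2 ≤ q := by nlinarith
  have hdiff : q^2 - p^2 = 1 := by rw [hp2, hq2]; ring
  have hqp1 : (q - p) * (q + p) = 1 := by linear_combination hdiff
  have key1 : q^2 + p*q + p^2 < q^2*(q+p) := by
    nlinarith [mul_nonneg (sq_nonneg q) (sub_nonneg.mpr hq2'),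
      mul_nonneg (mul_nonneg hp.le hq.le) (show (0:ℝ) ≤ q - 1 by linarith)]
  have h5 : q^3 - p^3 < q^2 := by
    have h6 := mul_lt_mul_of_pos_left key1 (sub_pos.mpr hpq)
    calc q^3 - p^3 = (q-p)*(q^2+p*q+p^2) := by ring
      _ < (q-p)*(q^2*(q+p)) := h6
      _ = q^2*((q-p)*(q+p)) := by ring
      _ = q^2 := by rw [hqp1, mul_one]
  have h5n : 0 ≤ q^3 - p^3 := by nlinarith
  have hpoly : (q^3 - p^3)^2 < q^4 := by nlinarith [pow_pos hq 2]
  have expand : (1/p^3 - 1/q^3)^2 = (q^3 - p^3)^2 / (p^3*q^3)^2 := by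
    field_simp
  rw [expand, div_lt_div_iff₀ (by positivity) (by positivity)]
  have hfin := mul_lt_mul_of_pos_right hpoly (show (0:ℝ) < p^6*q^2 by positivity)
  calc (q^3-p^3)^2 * ((p^2)^3*q^2) = (q^3-p^3)^2*(p^6*q^2) := by ring
    _ < q^4*(p^6*q^2) := hfin
    _ = 1*((p^3*q^3)^2) := by ring

set_option maxHeartbeats 1000000 in
/-- Lemma 6.5: for integers 3 ≤ m ≤ N and ρ, x ∈ (0, π/(N+1)),
sin(mρ)sin(mx)/m³ − sin((m+1)ρ)sin((m+1)x)/(m+1)³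
  > sin(ρ)sin(x)·(1/m^{3/2} − 1/(m+1)^{3/2})². -/
theorem sin_diff_quotient_gt (N m : ℕ) (hN : 3 ≤ N) (hm3 : 3 ≤ m) (hmN : m ≤ N)
    (ρ x : ℝ) (hρ0 : 0 < ρ) (hρ : ρ < Real.pi / (N + 1))
    (hx0 : 0 < x) (hx : x < Real.pi / (N + 1)) :
    Real.sin ρ * Real.sin x *
        (1 / (m : ℝ) ^ ((3 : ℝ) / 2) - 1 / ((m : ℝ) + 1) ^ ((3 : ℝ) / 2)) ^ 2 <
      Real.sin (m * ρ) * Real.sin (m * x) / (m : ℝ) ^ 3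
        - Real.sin ((m + 1 : ℕ) * ρ) * Real.sin ((m + 1 : ℕ) * x) / ((m : ℝ) + 1) ^ 3 := by
  push_cast
  set M : ℝ := (m : ℝ) with hM_def
  have hMr : (3:ℝ) ≤ M := by rw [hM_def]; exact_mod_cast hm3
  have hNr : M ≤ (N:ℝ) := by rw [hM_def]; exact_mod_cast hmN
  have hM0 : (0:ℝ) < M := by linarith
  have hN1 : (0:ℝ) < (N:ℝ) + 1 := by positivity
  have ht : Real.pi / ((N:ℝ)+1) * ((N:ℝ)+1) = Real.pi := div_mul_cancel₀ _ hN1.ne'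
  set t : ℝ := Real.pi / ((N:ℝ)+1) with ht_def
  have ht0 : 0 < t := by positivity
  -- (M+1)·ρ < π and (M+1)·x < π
  have hρπ : (M+1)*ρ < Real.pi := by nlinarith
  have hxπ : (M+1)*x < Real.pi := by nlinarith
  have hmρπ : M*ρ < Real.pi := by nlinarith
  have hmxπ : M*x < Real.pi := by nlinarith
  have hρπ' : ρ < Real.pi := by nlinarith
  have hxπ' : x < Real.pi := by nlinarith
  -- positivity of all sines
  have hsρ : 0 < Real.sin ρ := Real.sin_pos_of_pos_of_lt_pi hρ0 hρπ'
  have hsx : 0 < Real.sin x := Real.sin_pos_of_pos_of_lt_pi hx0 hxπ'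
  have hsp : 0 < Real.sin (M*ρ) := Real.sin_pos_of_pos_of_lt_pi (by positivity) hmρπ
  have htp : 0 < Real.sin (M*x) := Real.sin_pos_of_pos_of_lt_pi (by positivity) hmxπ
  have hsq : 0 < Real.sin ((M+1)*ρ) := Real.sin_pos_of_pos_of_lt_pi (by positivity) hρπ
  have htq : 0 < Real.sin ((M+1)*x) := Real.sin_pos_of_pos_of_lt_pi (by positivity) hxπ
  -- sinc monotonicity
  have h1ρ : Real.sin ((M+1)*ρ) * M < Real.sin (M*ρ) * (M+1) := by
    have h := aux_sinc (show 0 < M*ρ by positivity) (show M*ρ < (M+1)*ρ by nlinarith) hρπ.le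
    refine (mul_lt_mul_iff_of_pos_right hρ0).mp ?_
    calc Real.sin ((M+1)*ρ) * M * ρ = Real.sin ((M+1)*ρ) * (M*ρ) := by ring
      _ < Real.sin (M*ρ) * ((M+1)*ρ) := h
      _ = Real.sin (M*ρ) * (M+1) * ρ := by ring
  have h1x : Real.sin ((M+1)*x) * M < Real.sin (M*x) * (M+1) := by
    have h := aux_sinc (show 0 < M*x by positivity) (show M*x < (M+1)*x by nlinarith) hxπ.le
    refine (mul_lt_mul_iff_of_pos_right hx0).mp ?_
    calc Real.sin ((M+1)*x) * M * x = Real.sin ((M+1)*x) * (M*x) := by ring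
      _ < Real.sin (M*x) * ((M+1)*x) := h
      _ = Real.sin (M*x) * (M+1) * x := by ring
  -- sin ρ ≤ sin (Mρ)
  have h2ρ : Real.sin ρ ≤ Real.sin (M*ρ) :=
    aux_sin_le hρ0 (by nlinarith) (by nlinarith)
  have h2x : Real.sin x ≤ Real.sin (M*x) :=
    aux_sin_le hx0 (by nlinarith) (by nlinarith)
  -- product inequality
  have hquad : Real.sin ((M+1)*ρ) * Real.sin ((M+1)*x) * M^2
      < Real.sin (M*ρ) * Real.sin (M*x) * (M+1)^2 := by
    have h := mul_lt_mul h1ρ h1x.le (by positivity) (by positivity)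
    nlinarith [h]
  have hstep : Real.sin ((M+1)*ρ) * Real.sin ((M+1)*x) / (M+1)^3
      < Real.sin (M*ρ) * Real.sin (M*x) / (M^2*(M+1)) := by
    rw [div_lt_div_iff₀ (by positivity) (by positivity)]
    have h := mul_lt_mul_of_pos_right hquad (show (0:ℝ) < M+1 by linarith)
    nlinarith [h]
  calc Real.sin ρ * Real.sin x * (1 / M ^ ((3:ℝ)/2) - 1 / (M+1) ^ ((3:ℝ)/2)) ^ 2
      < Real.sin ρ * Real.sin x * (1/(M^3*(M+1))) :=
        mul_lt_mul_of_pos_left (aux_key hMr) (by positivity)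
    _ ≤ Real.sin (M*ρ) * Real.sin (M*x) * (1/(M^3*(M+1))) := by
        apply mul_le_mul_of_nonneg_right _ (by positivity)
        exact mul_le_mul h2ρ h2x hsx.le hsp.le
    _ = Real.sin (M*ρ) * Real.sin (M*x) / M^3
        - Real.sin (M*ρ) * Real.sin (M*x) / (M^2*(M+1)) := by
        field_simp
        ring
    _ < Real.sin (M*ρ) * Real.sin (M*x) / M^3
        - Real.sin ((M+1)*ρ) * Real.sin ((M+1)*x) / (M+1)^3 := by linarith
end

section
/- Let c : ℕ → ℝ be a sequence (indexed from 1) satisfying 0 < c(m+1) < c(m) for every integer m ≥ 1. Then for every x ∈ [π/4, 3π/4] and every ρ ∈ (0, π), the series ∑_{m=1}^∞ (c(m)/m³)·sin(m·ρ)·sin(m·x) converges absolutely and its sum is strictly positive. (This is the abstract form of Proposition 5.1, applied in the paper with c(m) = φ_m(y,w), the Fourier components of the Green function of the partially hinged plate problem, which are positive and strictly decreasing in m by Theorem 2.1.) -/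
open Real

private lemma aux_abs_sin_nat_mul (θ : ℝ) : ∀ n : ℕ, |Real.sin (n * θ)| ≤ n * |Real.sin θ| := by
  intro n
  induction n with
  | zero => simp
  | succ n ih =>
    have h : ((n : ℝ) + 1) * θ = n * θ + θ := by ring
    push_cast
    rw [h, Real.sin_add]
    calc |Real.sin (n * θ) * Real.cos θ + Real.cos (n * θ) * Real.sin θ|
        ≤ |Real.sin (n * θ) * Real.cos θ| + |Real.cos (n * θ) * Real.sin θ| := abs_add_le _ _
      _ ≤ |Real.sin (n * θ)| * 1 + 1 * |Real.sin θ| := by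
          rw [abs_mul, abs_mul]
          gcongr <;> [exact Real.abs_cos_le_one θ; exact Real.abs_cos_le_one _]
      _ ≤ (n : ℝ) * |Real.sin θ| + 1 * |Real.sin θ| := by
          rw [mul_one]; gcongr
      _ = ((n : ℝ) + 1) * |Real.sin θ| := by ring

/-- Abstract form of Proposition 5.1: if 0 < c(m+1) < c(m) for all m ≥ 1, then
for x ∈ [π/4, 3π/4] and ρ ∈ (0,π) the series ∑_{m≥1} (c(m)/m³)·sin(mρ)·sin(mx)
converges absolutely and has strictly positive sum. -/
theorem green_series_pos_central (c : ℕ → ℝ)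
    (hc : ∀ m : ℕ, 1 ≤ m → 0 < c (m + 1) ∧ c (m + 1) < c m)
    (x ρ : ℝ) (hx : x ∈ Set.Icc (Real.pi / 4) (3 * Real.pi / 4))
    (hρ : ρ ∈ Set.Ioo 0 Real.pi) :
    (Summable fun n : ℕ =>
      |(c (n + 1) / ((n : ℝ) + 1) ^ 3) * Real.sin (((n : ℝ) + 1) * ρ) *
        Real.sin (((n : ℝ) + 1) * x)|) ∧
    0 < ∑' n : ℕ,
      (c (n + 1) / ((n : ℝ) + 1) ^ 3) * Real.sin (((n : ℝ) + 1) * ρ) *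
        Real.sin (((n : ℝ) + 1) * x) := by
  obtain ⟨hρ0, hρπ⟩ := hρ
  obtain ⟨hx1, hx2⟩ := hx
  have hsinρ : 0 < Real.sin ρ := Real.sin_pos_of_pos_of_lt_pi hρ0 hρπ
  -- positivity and monotonicity of c
  have hc2 : 0 < c 2 := (hc 1 le_rfl).1
  have hc21 : c 2 < c 1 := (hc 1 le_rfl).2
  have hc1 : 0 < c 1 := hc2.trans hc21
  have hcle2 : ∀ n : ℕ, c (n + 2) ≤ c 2 := by
    intro n
    induction n with
    | zero => exact le_rfl
    | succ n ih => exact le_trans (le_of_lt (hc (n + 2) (by omega)).2) ih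
  have hcpos : ∀ n : ℕ, 0 < c (n + 1) := by
    intro n
    cases n with
    | zero => exact hc1
    | succ n => exact (hc (n + 1) (by omega)).1
  have hcle : ∀ n : ℕ, c (n + 1) ≤ c 1 := by
    intro n
    cases n with
    | zero => exact le_rfl
    | succ n => exact le_trans (hcle2 n) (le_of_lt hc21)
  set f : ℕ → ℝ := fun n =>
    (c (n + 1) / ((n : ℝ) + 1) ^ 3) * Real.sin (((n : ℝ) + 1) * ρ) *
      Real.sin (((n : ℝ) + 1) * x) with hf
  -- pointwise bound
  have hbound : ∀ n : ℕ, |f n| ≤ c (n + 1) * Real.sin ρ / ((n : ℝ) + 1) ^ 2 := by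
    intro n
    have hn1 : (0 : ℝ) < (n : ℝ) + 1 := by positivity
    have hsin1 : |Real.sin (((n : ℝ) + 1) * ρ)| ≤ ((n : ℝ) + 1) * Real.sin ρ := by
      have := aux_abs_sin_nat_mul ρ (n + 1)
      rw [abs_of_pos hsinρ] at this
      push_cast at this
      exact this
    have hsin2 : |Real.sin (((n : ℝ) + 1) * x)| ≤ 1 := Real.abs_sin_le_one _
    calc |f n| = |c (n + 1)| / ((n : ℝ) + 1) ^ 3 * |Real.sin (((n : ℝ) + 1) * ρ)| *
          |Real.sin (((n : ℝ) + 1) * x)| := by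
          rw [hf]; simp [abs_mul, abs_div, abs_of_pos (pow_pos hn1 3)]
      _ ≤ c (n + 1) / ((n : ℝ) + 1) ^ 3 * (((n : ℝ) + 1) * Real.sin ρ) * 1 := by
          rw [abs_of_pos (hcpos n)]
          have hA : 0 ≤ c (n + 1) / ((n : ℝ) + 1) ^ 3 :=
            div_nonneg (hcpos n).le (by positivity)
          have hB : 0 ≤ c (n + 1) / ((n : ℝ) + 1) ^ 3 * (((n : ℝ) + 1) * Real.sin ρ) :=
            mul_nonneg hA (mul_nonneg (by positivity) hsinρ.le)
          exact mul_le_mul (mul_le_mul_of_nonneg_left hsin1 hA) hsin2 (abs_nonneg _) hB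
      _ = c (n + 1) * Real.sin ρ / ((n : ℝ) + 1) ^ 2 := by
          field_simp
  -- summability
  have hzeta : HasSum (fun n : ℕ => (1 : ℝ) / (n : ℝ) ^ 2) (π ^ 2 / 6) := hasSum_zeta_two
  have hzeta1 : Summable (fun n : ℕ => (1 : ℝ) / ((n : ℝ) + 1) ^ 2) := by
    have := (summable_nat_add_iff 1).2 hzeta.summable
    simpa using this
  have hsumabs : Summable fun n : ℕ => |f n| := by
    apply Summable.of_nonneg_of_le (fun n => abs_nonneg _) hbound
    have : Summable (fun n : ℕ => (c 1 * Real.sin ρ) * ((1 : ℝ) / ((n : ℝ) + 1) ^ 2)) :=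
      hzeta1.mul_left _
    apply this.of_nonneg_of_le
    · intro n; exact div_nonneg (mul_nonneg (hcpos n).le hsinρ.le) (by positivity)
    · intro n
      have hn1 : (0 : ℝ) < ((n : ℝ) + 1) ^ 2 := by positivity
      rw [div_le_iff₀ hn1]
      have : c (n + 1) * Real.sin ρ ≤ c 1 * Real.sin ρ := by
        gcongr; exact hcle n
      calc c (n + 1) * Real.sin ρ ≤ c 1 * Real.sin ρ := this
        _ = c 1 * Real.sin ρ * (1 / ((n : ℝ) + 1) ^ 2) * ((n : ℝ) + 1) ^ 2 := by
            field_simp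
  refine ⟨hsumabs, ?_⟩
  have hsumf : Summable f := hsumabs.of_abs
  -- split off first term
  rw [Summable.tsum_eq_zero_add hsumf]
  have hf0 : f 0 = c 1 * Real.sin ρ * Real.sin x := by simp [hf]
  -- bound on sin x
  have hπ : (0 : ℝ) < π := Real.pi_pos
  have hsinx : Real.sqrt 2 / 2 ≤ Real.sin x := by
    rcases le_or_gt x (π / 2) with h | h
    · calc Real.sqrt 2 / 2 = Real.sin (π / 4) := (Real.sin_pi_div_four).symm
        _ ≤ Real.sin x := by
            apply Real.sin_le_sin_of_le_of_le_pi_div_two _ h hx1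
            linarith
    · have hx' : π - x ∈ Set.Icc (π / 4) (π / 2) := ⟨by linarith, by linarith⟩
      calc Real.sqrt 2 / 2 = Real.sin (π / 4) := (Real.sin_pi_div_four).symm
        _ ≤ Real.sin (π - x) := by
            apply Real.sin_le_sin_of_le_of_le_pi_div_two _ hx'.2 hx'.1
            linarith
        _ = Real.sin x := Real.sin_pi_sub x
  -- tail sum bound
  have hzeta2 : HasSum (fun n : ℕ => (1 : ℝ) / ((n : ℝ) + 2) ^ 2) (π ^ 2 / 6 - 1) := by
    have := (hasSum_nat_add_iff' (f := fun n : ℕ => (1 : ℝ) / (n : ℝ) ^ 2) 2).2 hzeta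
    simp only [Finset.sum_range_succ, Finset.sum_range_zero, Nat.cast_zero, Nat.cast_one] at this
    norm_num at this
    convert this using 2 with n
    push_cast
    · rfl
    · exact one_div _
  have htailbound : ∀ n : ℕ, |f (n + 1)| ≤ (c 2 * Real.sin ρ) * ((1 : ℝ) / ((n : ℝ) + 2) ^ 2) := by
    intro n
    have := hbound (n + 1)
    push_cast at this
    have h3 : ((n : ℝ) + 1 + 1) = ((n : ℝ) + 2) := by ring
    rw [h3] at this
    have h2 : c (n + 1 + 1) * Real.sin ρ / ((n : ℝ) + 2) ^ 2 ≤
        (c 2 * Real.sin ρ) * (1 / ((n : ℝ) + 2) ^ 2) := by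
      rw [div_eq_mul_one_div]
      gcongr
      exact hcle2 n
    exact le_trans this h2
  have htailsummable : Summable fun n : ℕ => |f (n + 1)| := hsumabs.comp_injective (add_left_injective 1)
  have htail : |∑' n : ℕ, f (n + 1)| ≤ (c 2 * Real.sin ρ) * (π ^ 2 / 6 - 1) := by
    calc |∑' n : ℕ, f (n + 1)| ≤ ∑' n : ℕ, |f (n + 1)| := by
          have := norm_tsum_le_tsum_norm (f := fun n : ℕ => f (n + 1))
            (by simpa [Real.norm_eq_abs] using htailsummable)
          simpa [Real.norm_eq_abs] using this
      _ ≤ ∑' n : ℕ, (c 2 * Real.sin ρ) * ((1 : ℝ) / ((n : ℝ) + 2) ^ 2) :=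
          Summable.tsum_le_tsum htailbound htailsummable ((hzeta2.summable).mul_left _)
      _ = (c 2 * Real.sin ρ) * (π ^ 2 / 6 - 1) := by
          rw [tsum_mul_left, hzeta2.tsum_eq]
  -- numeric inequality: π²/6 - 1 < √2/2
  have hpi : π < 3.15 := Real.pi_lt_d2
  have hsqrt2 : (1.4 : ℝ) < Real.sqrt 2 := by
    nlinarith [Real.sq_sqrt (show (0:ℝ) ≤ 2 by norm_num), Real.sqrt_nonneg 2]
  have hnum : π ^ 2 / 6 - 1 < Real.sqrt 2 / 2 := by nlinarith
  have hkey : (c 2 * Real.sin ρ) * (π ^ 2 / 6 - 1) < c 1 * Real.sin ρ * (Real.sqrt 2 / 2) := by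
    have h1 : (0 : ℝ) < π ^ 2 / 6 - 1 := by nlinarith [Real.pi_gt_three]
    nlinarith [mul_pos (mul_pos (sub_pos.2 hc21) hsinρ) h1,
      mul_pos (mul_pos hc1 hsinρ) (sub_pos.2 hnum)]
  have hfirst : c 1 * Real.sin ρ * (Real.sqrt 2 / 2) ≤ f 0 := by
    rw [hf0]
    exact mul_le_mul_of_nonneg_left hsinx (mul_nonneg hc1.le hsinρ.le)
  have := neg_abs_le (∑' n : ℕ, f (n + 1))
  linarith
end

section
/- Let c : ℕ → ℝ be a sequence (indexed from 1) satisfying 0 < c(m+1) < c(m) for every integer m ≥ 1. Then for all x, ρ ∈ (0, π/4), the series ∑_{m=1}^∞ (c(m)/m³)·sin(m·ρ)·sin(m·x) converges absolutely and its sum is strictly positive. (This is the abstract form of Proposition 5.4, applied in the paper with c(m) = φ_m(y,w), the Fourier components of the Green function of the partially hinged plate problem, which are positive and strictly decreasing in m by Theorem 2.1; it yields positivity of the Green function when both points lie near the same hinged edge.) -/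
open Real Finset

private lemma tail_sq (N : ℕ) (hN : 1 ≤ N) : ∀ k, N ≤ k →
    ∑ m ∈ Finset.Ico N k, (1:ℝ)/((m:ℝ)+1)^2 ≤ 1/(N:ℝ) := by
  have key : ∀ k, N ≤ k → ∑ m ∈ Finset.Ico N k, (1:ℝ)/((m:ℝ)+1)^2 ≤ 1/(N:ℝ) - 1/(k:ℝ) := by
    intro k hk
    induction k, hk using Nat.le_induction with
    | base => simp
    | succ k hk ih =>
      rw [Finset.sum_Ico_succ_top hk]
      have hk1 : (1:ℝ) ≤ (k:ℝ) := by exact_mod_cast hN.trans hk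
      have hkpos : (0:ℝ) < (k:ℝ) := by linarith
      have h1 : (1:ℝ)/((k:ℝ)+1)^2 ≤ 1/(k:ℝ) - 1/((k:ℝ)+1) := by
        have e : 1/(k:ℝ) - 1/((k:ℝ)+1) = 1/((k:ℝ)*((k:ℝ)+1)) := by
          field_simp
          ring
        rw [e]
        apply one_div_le_one_div_of_le (by positivity)
        nlinarith
      push_cast
      push_cast at ih
      linarith
  intro k hk
  have := key k hk
  have hkpos : 0 < k := lt_of_lt_of_le hN hk
  have : (0:ℝ) < (k:ℝ) := by exact_mod_cast hkpos
  have h2 : (0:ℝ) ≤ 1/(k:ℝ) := by positivity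
  linarith [key k hk]

private lemma sinsum_pos {t : ℝ} (ht : 0 < t) (ht' : t < π/2) {k : ℕ} (hk : 1 ≤ k) :
    0 < ∑ m ∈ Finset.range k, Real.sin (((m:ℝ)+1)*t)/((m:ℝ)+1)^2 := by
  have hπ := Real.pi_pos
  set N := ⌊π/t⌋₊ with hNdef
  have h2N : 2 ≤ N := by
    apply Nat.le_floor
    rw [le_div_iff₀ ht]
    push_cast
    linarith
  have hNt : (N:ℝ) * t ≤ π := by
    have h := Nat.floor_le (le_of_lt (div_pos hπ ht))
    calc (N:ℝ) * t ≤ (π/t) * t := by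
          apply mul_le_mul_of_nonneg_right h ht.le
      _ = π := by field_simp
  have hnonneg : ∀ m : ℕ, m + 1 ≤ N → 0 ≤ Real.sin (((m:ℝ)+1)*t) := by
    intro m hm
    apply Real.sin_nonneg_of_nonneg_of_le_pi (by positivity)
    have : ((m:ℝ)+1) ≤ (N:ℝ) := by exact_mod_cast hm
    calc ((m:ℝ)+1)*t ≤ (N:ℝ)*t := by nlinarith
      _ ≤ π := hNt
  have hsin1 : 0 < Real.sin t := Real.sin_pos_of_pos_of_lt_pi ht (by linarith)
  rcases le_or_gt k N with hkN | hNk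
  · apply Finset.sum_pos'
    · intro m hm
      rw [Finset.mem_range] at hm
      exact div_nonneg (hnonneg m (by omega)) (by positivity)
    · refine ⟨0, Finset.mem_range.2 (by omega), ?_⟩
      simp only [Nat.cast_zero, zero_add, one_mul, one_pow, div_one]
      exact hsin1
  · -- split the sum
    rw [Finset.range_eq_Ico, ← Finset.sum_Ico_consecutive _ (Nat.zero_le N) hNk.le]
    have hsin2 : 0 < Real.sin (2*t) := by
      apply Real.sin_pos_of_pos_of_lt_pi (by linarith)
      linarith
    -- first sum ≥ sin t + sin (2t)/4
    have hA : Real.sin t + Real.sin (2*t)/4 ≤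
        ∑ m ∈ Finset.Ico 0 N, Real.sin (((m:ℝ)+1)*t)/((m:ℝ)+1)^2 := by
      have hsub : ({0,1} : Finset ℕ) ⊆ Finset.Ico 0 N := by
        intro i hi
        simp only [Finset.mem_insert, Finset.mem_singleton] at hi
        rcases hi with rfl | rfl <;> simp <;> omega
      calc Real.sin t + Real.sin (2*t)/4
          = ∑ m ∈ ({0,1} : Finset ℕ), Real.sin (((m:ℝ)+1)*t)/((m:ℝ)+1)^2 := by
            rw [Finset.sum_pair (by norm_num : (0:ℕ) ≠ 1)]
            norm_num
        _ ≤ ∑ m ∈ Finset.Ico 0 N, Real.sin (((m:ℝ)+1)*t)/((m:ℝ)+1)^2 := by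
            apply Finset.sum_le_sum_of_subset_of_nonneg hsub
            intro i hi _
            rw [Finset.mem_Ico] at hi
            exact div_nonneg (hnonneg i (by omega)) (by positivity)
    -- second sum ≥ -1/N
    have hB : -(1/(N:ℝ)) ≤ ∑ m ∈ Finset.Ico N k, Real.sin (((m:ℝ)+1)*t)/((m:ℝ)+1)^2 := by
      have h1 : ∑ m ∈ Finset.Ico N k, (-(1:ℝ)/((m:ℝ)+1)^2) ≤
          ∑ m ∈ Finset.Ico N k, Real.sin (((m:ℝ)+1)*t)/((m:ℝ)+1)^2 := by
        apply Finset.sum_le_sum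
        intro m _
        exact div_le_div_of_nonneg_right (Real.neg_one_le_sin _) (by positivity) |>.trans_eq rfl
      have h2 : ∑ m ∈ Finset.Ico N k, (-(1:ℝ)/((m:ℝ)+1)^2) =
          -∑ m ∈ Finset.Ico N k, (1:ℝ)/((m:ℝ)+1)^2 := by
        rw [← Finset.sum_neg_distrib]
        apply Finset.sum_congr rfl
        intro m _; rw [neg_div]
      rw [h2] at h1
      have h3 := tail_sq N (by omega) k hNk.le
      linarith
    -- numeric: 1/N ≤ sin t
    have hNinv : (1:ℝ)/(N:ℝ) ≤ Real.sin t := by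
      have hst : 2/π * t ≤ Real.sin t := Real.mul_le_sin ht.le ht'.le
      have hfl : π/t - 1 < (N:ℝ) := by
        have := Nat.sub_one_lt_floor (π/t)
        exact_mod_cast this
      have h2t : (2:ℝ) ≤ π/t := by rw [le_div_iff₀ ht]; linarith
      have hNge : π/(2*t) ≤ (N:ℝ) := by
        have e : π/(2*t) = (π/t)/2 := by ring
        linarith
      have hNpos : (0:ℝ) < (N:ℝ) := by
        have : (0:ℕ) < N := by omega
        exact_mod_cast this
      have := one_div_le_one_div_of_le (by positivity : (0:ℝ) < π/(2*t)) hNge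
      calc (1:ℝ)/(N:ℝ) ≤ 1/(π/(2*t)) := this
        _ = 2/π * t := by rw [one_div_div]; ring
        _ ≤ Real.sin t := hst
    linarith

private lemma Tk_pos {x ρ : ℝ} (hx1 : 0 < x) (hx2 : x < π/4) (hρ1 : 0 < ρ) (hρ2 : ρ < π/4)
    {k : ℕ} (hk : 1 ≤ k) :
    0 < ∑ m ∈ Finset.range k,
      Real.sin (((m:ℝ)+1)*ρ) * Real.sin (((m:ℝ)+1)*x) / ((m:ℝ)+1)^3 := by
  have hπ := Real.pi_pos
  set F : ℝ → ℝ := fun t => ∑ m ∈ Finset.range k, Real.cos (((m:ℝ)+1)*t)/((m:ℝ)+1)^3 with hFdef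
  have hanti : StrictAntiOn F (Set.Icc 0 (π/2)) := by
    apply strictAntiOn_of_deriv_neg (convex_Icc _ _)
    · apply Continuous.continuousOn
      apply continuous_finset_sum
      intro m _
      exact (Real.continuous_cos.comp (continuous_const.mul continuous_id)).div_const _
    · intro t htmem
      rw [interior_Icc] at htmem
      have hd : ∀ m ∈ Finset.range k,
          HasDerivAt (fun t => Real.cos (((m:ℝ)+1)*t)/((m:ℝ)+1)^3)
            (-(Real.sin (((m:ℝ)+1)*t)/((m:ℝ)+1)^2)) t := by
        intro m _
        have h := (((hasDerivAt_id t).const_mul ((m:ℝ)+1)).cos).div_const (((m:ℝ)+1)^3)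
        refine h.congr_deriv ?_
        have : ((m:ℝ)+1) ≠ 0 := by positivity
        simp only [id]
        field_simp
      have hF : HasDerivAt F (∑ m ∈ Finset.range k,
          -(Real.sin (((m:ℝ)+1)*t)/((m:ℝ)+1)^2)) t := HasDerivAt.fun_sum hd
      rw [hF.deriv, Finset.sum_neg_distrib, neg_lt_zero]
      exact sinsum_pos htmem.1 htmem.2 hk
  have hxr : |x - ρ| < x + ρ := abs_sub_lt_iff.2 ⟨by linarith, by linarith⟩
  have h1 : |x - ρ| ∈ Set.Icc 0 (π/2) := ⟨abs_nonneg _, by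
    have : x + ρ ≤ π/2 := by linarith
    linarith [hxr]⟩
  have h2 : x + ρ ∈ Set.Icc 0 (π/2) := ⟨by linarith, by linarith⟩
  have hF2 : F (x + ρ) < F (|x - ρ|) := hanti h1 h2 hxr
  have hFeq : F (|x - ρ|) = F (x - ρ) := by
    apply Finset.sum_congr rfl
    intro m _
    congr 1
    rw [← Real.cos_abs (((m:ℝ)+1)*(x-ρ)), abs_mul,
      abs_of_nonneg (by positivity : (0:ℝ) ≤ (m:ℝ)+1)]
  have key : ∑ m ∈ Finset.range k,
      Real.sin (((m:ℝ)+1)*ρ) * Real.sin (((m:ℝ)+1)*x) / ((m:ℝ)+1)^3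
      = (F (x - ρ) - F (x + ρ))/2 := by
    simp only [hFdef, ← Finset.sum_sub_distrib, Finset.sum_div]
    apply Finset.sum_congr rfl
    intro m _
    set a : ℝ := (m:ℝ)+1 with ha
    have e : Real.cos (a*(x-ρ)) - Real.cos (a*(x+ρ)) = 2 * Real.sin (a*ρ) * Real.sin (a*x) := by
      rw [Real.cos_sub_cos,
        show (a*(x-ρ) + a*(x+ρ))/2 = a*x by ring,
        show (a*(x-ρ) - a*(x+ρ))/2 = -(a*ρ) by ring, Real.sin_neg]
      ring
    rw [div_sub_div_same, e]
    ring
  rw [key]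
  linarith [hFeq ▸ hF2]

/-- Abstract form of Proposition 5.4: if 0 < c(m+1) < c(m) for all m ≥ 1, then
for x, ρ ∈ (0, π/4) the series ∑_{m≥1} (c(m)/m³)·sin(mρ)·sin(mx) converges
absolutely and has strictly positive sum. -/
theorem green_series_pos_same_edge (c : ℕ → ℝ)
    (hc : ∀ m : ℕ, 1 ≤ m → 0 < c (m + 1) ∧ c (m + 1) < c m)
    (x ρ : ℝ) (hx : x ∈ Set.Ioo 0 (Real.pi / 4)) (hρ : ρ ∈ Set.Ioo 0 (Real.pi / 4)) :
    (Summable fun n : ℕ =>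
      |(c (n + 1) / ((n : ℝ) + 1) ^ 3) * Real.sin (((n : ℝ) + 1) * ρ) *
        Real.sin (((n : ℝ) + 1) * x)|) ∧
    0 < ∑' n : ℕ,
      (c (n + 1) / ((n : ℝ) + 1) ^ 3) * Real.sin (((n : ℝ) + 1) * ρ) *
        Real.sin (((n : ℝ) + 1) * x) := by
  obtain ⟨hx1, hx2⟩ := hx
  obtain ⟨hρ1, hρ2⟩ := hρ
  have hπ := Real.pi_pos
  have hcpos : ∀ m : ℕ, 1 ≤ m → 0 < c m := fun m hm => lt_trans (hc m hm).1 (hc m hm).2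
  have hcle : ∀ m : ℕ, 1 ≤ m → c m ≤ c 1 := by
    intro m hm
    induction m with
    | zero => omega
    | succ n ih =>
      rcases Nat.lt_or_ge 1 (n+1) with h | h
      · have hn : 1 ≤ n := by omega
        exact le_trans (hc n hn).2.le (ih hn)
      · have hn0 : n = 0 := by omega
        subst hn0; exact le_refl _
  set term : ℕ → ℝ := fun n => (c (n + 1) / ((n : ℝ) + 1) ^ 3) * Real.sin (((n : ℝ) + 1) * ρ) *
      Real.sin (((n : ℝ) + 1) * x) with hterm
  -- summability
  have habs : Summable (fun n => |term n|) := by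
    have hbnd : ∀ n : ℕ, |term n| ≤ c 1 / ((n:ℝ)+1)^2 := by
      intro n
      have hcn : 0 < c (n+1) := hcpos (n+1) (by omega)
      have h1 : |term n| ≤ c (n+1) / ((n:ℝ)+1)^3 := by
        rw [hterm]
        simp only [abs_mul]
        rw [abs_of_pos (by positivity : (0:ℝ) < c (n+1) / ((n:ℝ)+1)^3)]
        calc c (n+1) / ((n:ℝ)+1)^3 * |Real.sin (((n:ℝ)+1)*ρ)| * |Real.sin (((n:ℝ)+1)*x)|
            ≤ c (n+1) / ((n:ℝ)+1)^3 * 1 * 1 := by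
              gcongr
              · exact Real.abs_sin_le_one _
              · exact Real.abs_sin_le_one _
          _ = c (n+1) / ((n:ℝ)+1)^3 := by ring
      refine h1.trans ?_
      apply div_le_div₀ (le_of_lt (lt_of_lt_of_le hcn (hcle (n+1) (by omega))))
        (hcle (n+1) (by omega)) (by positivity)
      apply pow_le_pow_right₀ (by linarith [Nat.cast_nonneg (α := ℝ) n]) (by norm_num)
    have hs2 : Summable (fun n : ℕ => (1:ℝ)/((n:ℝ)+1)^2) := by
      have h := Real.summable_one_div_nat_pow.mpr (le_refl 2)
      have := (summable_nat_add_iff 1).mpr h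
      simpa using this
    apply Summable.of_nonneg_of_le (fun n => abs_nonneg _) hbnd
    simpa [div_eq_mul_inv] using hs2.mul_left (c 1)
  refine ⟨habs, ?_⟩
  -- positivity
  set v : ℕ → ℝ := fun m => Real.sin (((m:ℝ)+1)*ρ) * Real.sin (((m:ℝ)+1)*x) / ((m:ℝ)+1)^3 with hv
  have htermv : ∀ n, term n = c (n+1) * v n := by
    intro n; rw [hterm, hv]; ring
  have hT : ∀ k : ℕ, 1 ≤ k → 0 < ∑ m ∈ Finset.range k, v m := fun k hk =>
    Tk_pos hx1 hx2 hρ1 hρ2 hk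
  have hv0 : 0 < v 0 := by
    rw [hv]
    simp only [Nat.cast_zero, zero_add, one_mul, one_pow, div_one]
    exact mul_pos (Real.sin_pos_of_pos_of_lt_pi hρ1 (by linarith))
      (Real.sin_pos_of_pos_of_lt_pi hx1 (by linarith))
  have hε : 0 < (c 1 - c 2) * v 0 := mul_pos (by linarith [(hc 1 le_rfl).2]) hv0
  have habel : ∀ K, 2 ≤ K →
      (c 1 - c 2) * v 0 + c K * ∑ m ∈ Finset.range K, v m ≤
        ∑ n ∈ Finset.range K, c (n+1) * v n := by
    intro K hK
    induction K, hK using Nat.le_induction with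
    | base =>
      simp only [Finset.sum_range_succ, Finset.sum_range_one]
      norm_num
      nlinarith [le_refl (c 1 * v 0 + c 2 * v 1)]
    | succ K hK ih =>
      rw [Finset.sum_range_succ, Finset.sum_range_succ (fun n => c (n+1) * v n), mul_add]
      have hstep : c (K+1) * ∑ m ∈ Finset.range K, v m ≤ c K * ∑ m ∈ Finset.range K, v m :=
        mul_le_mul_of_nonneg_right (hc K (by omega)).2.le (hT K (by omega)).le
      linarith
  have hs : Summable term := habs.of_abs
  apply lt_of_lt_of_le hε
  apply ge_of_tendsto hs.hasSum.tendsto_sum_nat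
  filter_upwards [Filter.eventually_ge_atTop 2] with K hK
  have h1 : ∑ n ∈ Finset.range K, term n = ∑ n ∈ Finset.range K, c (n+1) * v n :=
    Finset.sum_congr rfl fun n _ => htermv n
  have h2 := habel K hK
  have h3 : 0 ≤ c K * ∑ m ∈ Finset.range K, v m :=
    mul_nonneg (hcpos K (by omega)).le (hT K (by omega)).le
  rw [h1]
  linarith
end

section
/- Let c : ℕ → ℝ be a sequence (indexed from 1) satisfying 0 < c(m+1) < c(m) for every integer m ≥ 1. Then for all x, ρ ∈ (0, π/4), the alternating series ∑_{m=1}^∞ (−1)^{m+1}·(c(m)/m³)·sin(m·ρ)·sin(m·x) converges absolutely and its sum is strictly positive. (This is the abstract form of Proposition 5.7, applied in the paper with c(m) = φ_m(y,w), the Fourier components of the Green function of the partially hinged plate problem, which are positive and strictly decreasing in m by Theorem 2.1; it yields positivity of the Green function when the two points lie near opposite hinged edges.) -/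
open Real

open Finset


noncomputable def fjT (M : ℕ) (θ : ℝ) : ℝ :=
  ∑ m ∈ Finset.range M, Real.sin (((m:ℝ)+1)*θ)/((m:ℝ)+1)

lemma fjT_cont (M : ℕ) : Continuous (fjT M) := by
  unfold fjT
  fun_prop

lemma fjT_zero (M : ℕ) : fjT M 0 = 0 := by
  simp [fjT]

lemma fjT_pi (M : ℕ) : fjT M π = 0 := by
  unfold fjT
  apply Finset.sum_eq_zero
  intro m _
  have : ((m:ℝ)+1) * π = ((m+1 : ℕ) : ℝ) * π := by push_cast; ring
  rw [this, Real.sin_nat_mul_pi]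
  simp

lemma kernel (u : ℝ) (K : ℕ) :
    2 * Real.sin u * ∑ m ∈ Finset.range K, Real.cos (((m:ℝ)+1)*(2*u))
      = Real.sin ((2*(K:ℝ)+1)*u) - Real.sin u := by
  induction K with
  | zero => simp
  | succ K ih =>
    rw [Finset.sum_range_succ, mul_add, ih]
    push_cast
    have h1 : (2*((K:ℝ)+1)+1)*u = (2*(K:ℝ)+1)*u + 2*u := by ring
    have h2 : ((K:ℝ)+1)*(2*u) = (2*(K:ℝ)+1)*u + u := by ring
    rw [h1, h2, Real.sin_add, Real.cos_add, Real.sin_two_mul, Real.cos_two_mul']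
    linear_combination (-1 : ℝ) * Real.sin ((2*(K:ℝ)+1)*u) * Real.sin_sq_add_cos_sq u

lemma fjT_deriv (M : ℕ) (θ : ℝ) :
    HasDerivAt (fjT M) (∑ m ∈ Finset.range M, Real.cos (((m:ℝ)+1)*θ)) θ := by
  have h : ∀ m ∈ Finset.range M,
      HasDerivAt (fun θ => Real.sin (((m:ℝ)+1)*θ)/((m:ℝ)+1))
        (Real.cos (((m:ℝ)+1)*θ)) θ := by
    intro m _
    have h1 : HasDerivAt (fun θ : ℝ => ((m:ℝ)+1)*θ) ((m:ℝ)+1) θ := by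
      simpa using (hasDerivAt_id θ).const_mul ((m:ℝ)+1)
    have h2 := (h1.sin).div_const ((m:ℝ)+1)
    have hne : ((m:ℝ)+1) ≠ 0 := by positivity
    rw [mul_div_assoc, div_self hne, mul_one] at h2
    exact h2
  exact HasDerivAt.fun_sum h

/-- weak Fejér–Jackson inequality -/
lemma fjT_nonneg (M : ℕ) : ∀ θ ∈ Set.Icc 0 π, 0 ≤ fjT M θ := by
  induction M with
  | zero => intro θ _; simp [fjT]
  | succ M ih =>
    by_contra h
    push_neg at h
    obtain ⟨θ', hθ'mem, hθ'⟩ := h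
    obtain ⟨θ₀, hθ₀mem, hmin⟩ :=
      isCompact_Icc.exists_isMinOn (Set.nonempty_Icc.mpr Real.pi_pos.le)
        (fjT_cont (M+1)).continuousOn
    have hmin0 : fjT (M+1) θ₀ < 0 := lt_of_le_of_lt (hmin hθ'mem) hθ'
    have hθ₀0 : θ₀ ≠ 0 := by intro h0; rw [h0, fjT_zero] at hmin0; linarith
    have hθ₀pi : θ₀ ≠ π := by intro h0; rw [h0, fjT_pi] at hmin0; linarith
    have hIoo : θ₀ ∈ Set.Ioo 0 π :=
      ⟨lt_of_le_of_ne hθ₀mem.1 (Ne.symm hθ₀0), lt_of_le_of_ne hθ₀mem.2 hθ₀pi⟩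
    have hloc : IsLocalMin (fjT (M+1)) θ₀ :=
      hmin.isLocalMin (Icc_mem_nhds hIoo.1 hIoo.2)
    have hd0 : ∑ m ∈ Finset.range (M+1), Real.cos (((m:ℝ)+1)*θ₀) = 0 := by
      rw [← (fjT_deriv (M+1) θ₀).deriv]
      exact hloc.deriv_eq_zero
    -- use kernel with u = θ₀/2
    set u := θ₀/2 with hu
    have hθu : θ₀ = 2*u := by rw [hu]; ring
    have hker := kernel u (M+1)
    have hsum0 : ∑ m ∈ Finset.range (M+1), Real.cos (((m:ℝ)+1)*(2*u)) = 0 := by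
      rw [← hθu]; exact hd0
    rw [hsum0, mul_zero] at hker
    -- sin((2M+3)u) = sin u, factor
    set a := ((M:ℝ)+1)*u with ha
    set b := ((M:ℝ)+2)*u with hb
    have hfac : Real.sin a * Real.cos b = 0 := by
      have e1 : (2*((M:ℝ)+1)+1)*u = a + b := by rw [ha, hb]; push_cast; ring
      have h1 : Real.sin ((2*((M:ℝ)+1)+1)*u)
          = Real.sin a * Real.cos b + Real.cos a * Real.sin b := by
        rw [e1, Real.sin_add]
      have e2 : u = b - a := by rw [ha, hb]; ring
      have h2 : Real.sin u = Real.sin b * Real.cos a - Real.cos b * Real.sin a := by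
        rw [e2, Real.sin_sub]
      push_cast at hker
      linarith [hker, h1, h2]
    have hsinpos : 0 ≤ Real.sin (((M:ℝ)+1)*θ₀) := by
      rcases mul_eq_zero.mp hfac with hsa | hcb
      · have e3 : ((M:ℝ)+1)*θ₀ = 2*a := by rw [ha, hθu]; ring
        rw [e3, Real.sin_two_mul, hsa]
        simp
      · have e3 : ((M:ℝ)+1)*θ₀ = 2*b - 2*u := by rw [hb, hθu]; ring
        have hspos : 0 < Real.sin θ₀ := Real.sin_pos_of_pos_of_lt_pi hIoo.1 hIoo.2
        have heq : Real.sin (((M:ℝ)+1)*θ₀) = Real.sin (2*u) := by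
          rw [e3, Real.sin_sub, Real.sin_two_mul b, Real.cos_two_mul b, hcb]
          ring
        rw [heq, ← hθu]
        exact hspos.le
    have hsplit : fjT (M+1) θ₀ = fjT M θ₀ + Real.sin (((M:ℝ)+1)*θ₀)/((M:ℝ)+1) := by
      unfold fjT
      rw [Finset.sum_range_succ]
    have hIH := ih θ₀ hθ₀mem
    have : 0 ≤ Real.sin (((M:ℝ)+1)*θ₀)/((M:ℝ)+1) := by positivity
    linarith [hmin0, hsplit, hIH, this]

noncomputable def fjG (M : ℕ) (θ : ℝ) : ℝ :=
  ∑ m ∈ Finset.range M, Real.sin (((m:ℝ)+1)*θ)/((m:ℝ)+1)^2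

lemma fjG_key (M : ℕ) : ∀ θ ∈ Set.Icc 0 π,
    fjT M θ ≤ (M:ℝ) * fjG M θ ∧ 0 ≤ fjG M θ := by
  induction M with
  | zero => intro θ _; simp [fjT, fjG]
  | succ M ih =>
    intro θ hθ
    obtain ⟨h1, h2⟩ := ih θ hθ
    set d : ℝ := (M:ℝ)+1 with hd
    have hdpos : (0:ℝ) < d := by positivity
    have eG : fjG (M+1) θ = fjG M θ + Real.sin (d*θ)/d^2 := by
      unfold fjG; rw [Finset.sum_range_succ]
    have eT : fjT (M+1) θ = fjT M θ + Real.sin (d*θ)/d := by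
      unfold fjT; rw [Finset.sum_range_succ]
    have key : d*(Real.sin (d*θ)/d^2) = Real.sin (d*θ)/d := by
      field_simp
    have hcast : ((M+1:ℕ):ℝ) = d := by push_cast; ring
    have hmul : d * fjG M θ = (M:ℝ)*fjG M θ + fjG M θ := by rw [hd]; ring
    have c1 : fjT (M+1) θ ≤ ((M+1:ℕ):ℝ) * fjG (M+1) θ := by
      rw [hcast, eG, eT, mul_add, key, hmul]
      linarith
    refine ⟨c1, ?_⟩
    have hT := fjT_nonneg (M+1) θ hθ
    have := le_trans hT c1
    rw [hcast] at this
    nlinarith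

lemma fjG_nonneg (M : ℕ) : ∀ θ ∈ Set.Icc 0 π, 0 ≤ fjG M θ :=
  fun θ hθ => (fjG_key M θ hθ).2

noncomputable def fjF (M : ℕ) (θ : ℝ) : ℝ :=
  ∑ m ∈ Finset.range M, Real.cos (((m:ℝ)+1)*θ)/((m:ℝ)+1)^3

lemma fjF_deriv (M : ℕ) (θ : ℝ) : HasDerivAt (fjF M) (-(fjG M θ)) θ := by
  have h : ∀ m ∈ Finset.range M,
      HasDerivAt (fun θ => Real.cos (((m:ℝ)+1)*θ)/((m:ℝ)+1)^3)
        (-(Real.sin (((m:ℝ)+1)*θ)/((m:ℝ)+1)^2)) θ := by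
    intro m _
    have h1 : HasDerivAt (fun θ : ℝ => ((m:ℝ)+1)*θ) ((m:ℝ)+1) θ := by
      simpa using (hasDerivAt_id θ).const_mul ((m:ℝ)+1)
    have h2 := (h1.cos).div_const (((m:ℝ)+1)^3)
    have hne : ((m:ℝ)+1) ≠ 0 := by positivity
    have h3 : ((m:ℝ)+1)^3 = ((m:ℝ)+1)^2 * ((m:ℝ)+1) := by ring
    rw [h3, mul_div_mul_right _ _ hne, neg_div] at h2
    exact h2
  have := HasDerivAt.fun_sum h
  have e : ∑ m ∈ Finset.range M, -(Real.sin (((m:ℝ)+1)*θ)/((m:ℝ)+1)^2)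
      = -(fjG M θ) := by
    unfold fjG; rw [← Finset.sum_neg_distrib]
  rw [e] at this
  exact this

lemma fjF_anti (M : ℕ) : AntitoneOn (fjF M) (Set.Icc 0 π) := by
  apply antitoneOn_of_deriv_nonpos (convex_Icc 0 π)
  · exact fun θ _ => ((fjF_deriv M θ).continuousAt).continuousWithinAt
  · intro θ _
    exact ((fjF_deriv M θ).differentiableAt).differentiableWithinAt
  · intro θ hθ
    rw [interior_Icc] at hθ
    rw [(fjF_deriv M θ).deriv]
    have := fjG_nonneg M θ ⟨hθ.1.le, hθ.2.le⟩
    linarith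

lemma w_eq (x ρ : ℝ) (n : ℕ) :
    (-1:ℝ)^n * Real.sin (((n:ℝ)+1)*ρ) * Real.sin (((n:ℝ)+1)*x)
      = (Real.cos (((n:ℝ)+1)*(π - (x+ρ))) - Real.cos (((n:ℝ)+1)*(π - |x-ρ|))) / 2 := by
  have hc1 : Real.cos (((n:ℝ)+1)*(π - (x+ρ)))
      = (-1:ℝ)^(n+1) * Real.cos (((n:ℝ)+1)*(x+ρ)) := by
    have e : ((n:ℝ)+1)*(π - (x+ρ)) = ((n+1:ℕ):ℝ)*π - ((n:ℝ)+1)*(x+ρ) := by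
      push_cast; ring
    rw [e, Real.cos_nat_mul_pi_sub]
  have habs : Real.cos (((n:ℝ)+1)*|x-ρ|) = Real.cos (((n:ℝ)+1)*(x-ρ)) := by
    have e : ((n:ℝ)+1)*|x-ρ| = |((n:ℝ)+1)*(x-ρ)| := by
      rw [abs_mul, abs_of_pos (by positivity : (0:ℝ) < (n:ℝ)+1)]
    rw [e, Real.cos_abs]
  have hc2 : Real.cos (((n:ℝ)+1)*(π - |x-ρ|))
      = (-1:ℝ)^(n+1) * Real.cos (((n:ℝ)+1)*(x-ρ)) := by
    have e : ((n:ℝ)+1)*(π - |x-ρ|) = ((n+1:ℕ):ℝ)*π - ((n:ℝ)+1)*|x-ρ| := by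
      push_cast; ring
    rw [e, Real.cos_nat_mul_pi_sub, habs]
  rw [hc1, hc2, mul_add, mul_sub, Real.cos_add, Real.cos_sub, pow_succ]
  ring

/-- Abstract form of Proposition 5.7: if 0 < c(m+1) < c(m) for all m ≥ 1, then
for x, ρ ∈ (0, π/4) the alternating series
∑_{m≥1} (−1)^{m+1}·(c(m)/m³)·sin(mρ)·sin(mx) converges absolutely and has
strictly positive sum. -/
theorem green_series_pos_opposite_edges (c : ℕ → ℝ)
    (hc : ∀ m : ℕ, 1 ≤ m → 0 < c (m + 1) ∧ c (m + 1) < c m)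
    (x ρ : ℝ) (hx : x ∈ Set.Ioo 0 (Real.pi / 4)) (hρ : ρ ∈ Set.Ioo 0 (Real.pi / 4)) :
    (Summable fun n : ℕ =>
      |(-1 : ℝ) ^ ((n + 1) + 1) * (c (n + 1) / ((n : ℝ) + 1) ^ 3) *
        Real.sin (((n : ℝ) + 1) * ρ) * Real.sin (((n : ℝ) + 1) * x)|) ∧
    0 < ∑' n : ℕ,
      (-1 : ℝ) ^ ((n + 1) + 1) * (c (n + 1) / ((n : ℝ) + 1) ^ 3) *
        Real.sin (((n : ℝ) + 1) * ρ) * Real.sin (((n : ℝ) + 1) * x) := by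
  obtain ⟨hx0, hx4⟩ := hx
  obtain ⟨hρ0, hρ4⟩ := hρ
  have hπ := Real.pi_pos
  -- basic facts about c
  have hcpos : ∀ m : ℕ, 1 ≤ m → 0 < c m := by
    intro m hm
    match m, hm with
    | 1, _ => have h := hc 1 le_rfl; linarith [h.1, h.2]
    | (k+2), _ => exact (hc (k+1) (by omega)).1
  have hcdec : ∀ m : ℕ, 1 ≤ m → c (m+1) ≤ c m := fun m hm => (hc m hm).2.le
  have hcle1 : ∀ n : ℕ, c (n+1) ≤ c 1 := by
    intro n
    induction n with
    | zero => exact le_rfl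
    | succ k ih => exact le_trans (hcdec (k+1) (by omega)) ih
  -- the term and the kernel w
  set term : ℕ → ℝ := fun n =>
    (-1 : ℝ) ^ ((n + 1) + 1) * (c (n + 1) / ((n : ℝ) + 1) ^ 3) *
      Real.sin (((n : ℝ) + 1) * ρ) * Real.sin (((n : ℝ) + 1) * x) with hterm_def
  set w : ℕ → ℝ := fun n =>
    (-1:ℝ)^n * Real.sin (((n:ℝ)+1)*ρ) * Real.sin (((n:ℝ)+1)*x) / ((n:ℝ)+1)^3
    with hw_def
  have hterm : ∀ n, term n = c (n+1) * w n := by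
    intro n
    have hpow : (-1:ℝ)^((n+1)+1) = (-1:ℝ)^n := by
      rw [pow_succ, pow_succ]; ring
    simp only [hterm_def, hw_def, hpow]
    ring
  -- the angles
  set θ₁ : ℝ := π - (x + ρ) with hθ₁def
  set θ₂ : ℝ := π - |x - ρ| with hθ₂def
  have habs_le : |x - ρ| ≤ x + ρ := abs_le.mpr ⟨by linarith, by linarith⟩
  have hθ₁mem : θ₁ ∈ Set.Icc 0 π := ⟨by rw [hθ₁def]; linarith, by rw [hθ₁def]; linarith⟩
  have hθ₂mem : θ₂ ∈ Set.Icc 0 π := by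
    constructor
    · rw [hθ₂def]; have := abs_nonneg (x - ρ); linarith
    · rw [hθ₂def]; have := abs_nonneg (x - ρ); linarith
  have hθ12 : θ₁ ≤ θ₂ := by rw [hθ₁def, hθ₂def]; linarith
  -- partial sums of w are nonnegative
  have hUF : ∀ N : ℕ, ∑ n ∈ Finset.range N, w n = (fjF N θ₁ - fjF N θ₂) / 2 := by
    intro N
    unfold fjF
    rw [← Finset.sum_sub_distrib, Finset.sum_div]
    apply Finset.sum_congr rfl
    intro n _
    have h := w_eq x ρ n
    rw [hw_def]
    simp only
    rw [h]
    ring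
  have hU : ∀ N : ℕ, 0 ≤ ∑ n ∈ Finset.range N, w n := by
    intro N
    rw [hUF N]
    have := fjF_anti N hθ₁mem hθ₂mem hθ12
    linarith
  -- summability
  have hsin_abs : ∀ t : ℝ, |Real.sin t| ≤ 1 := fun t =>
    abs_le.mpr ⟨Real.neg_one_le_sin t, Real.sin_le_one t⟩
  have hbound : ∀ n : ℕ, |term n| ≤ c 1 * (1/((n:ℝ)+1)^2) := by
    intro n
    have hcn : (0:ℝ) ≤ c (n+1) := (hcpos (n+1) (by omega)).le
    have hq : (0:ℝ) ≤ c (n+1)/((n:ℝ)+1)^3 := div_nonneg hcn (by positivity)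
    have h1 : |term n| ≤ c (n+1) / ((n:ℝ)+1)^3 := by
      have habs1 : |term n| = c (n+1)/((n:ℝ)+1)^3 *
          (|Real.sin (((n:ℝ)+1)*ρ)| * |Real.sin (((n:ℝ)+1)*x)|) := by
        rw [hterm_def]
        simp only
        rw [abs_mul, abs_mul, abs_mul, abs_pow, abs_neg, abs_one, one_pow, one_mul,
          abs_of_nonneg hq]
        ring
      rw [habs1]
      have hss : |Real.sin (((n:ℝ)+1)*ρ)| * |Real.sin (((n:ℝ)+1)*x)| ≤ 1 := by
        nlinarith [hsin_abs (((n:ℝ)+1)*ρ), hsin_abs (((n:ℝ)+1)*x),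
          abs_nonneg (Real.sin (((n:ℝ)+1)*ρ)), abs_nonneg (Real.sin (((n:ℝ)+1)*x))]
      calc c (n+1)/((n:ℝ)+1)^3 * (|Real.sin (((n:ℝ)+1)*ρ)| * |Real.sin (((n:ℝ)+1)*x)|)
          ≤ c (n+1)/((n:ℝ)+1)^3 * 1 := mul_le_mul_of_nonneg_left hss hq
        _ = c (n+1)/((n:ℝ)+1)^3 := mul_one _
    have h2 : c (n+1) / ((n:ℝ)+1)^3 ≤ c 1 / ((n:ℝ)+1)^2 := by
      apply div_le_div₀ (hcpos 1 le_rfl).le (hcle1 n) (by positivity)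
      have : (1:ℝ) ≤ (n:ℝ)+1 := by
        have := (Nat.cast_nonneg n : (0:ℝ) ≤ (n:ℝ)); linarith
      calc ((n:ℝ)+1)^2 = ((n:ℝ)+1)^2 * 1 := by ring
        _ ≤ ((n:ℝ)+1)^2 * ((n:ℝ)+1) := by nlinarith
        _ = ((n:ℝ)+1)^3 := by ring
    calc |term n| ≤ c (n+1) / ((n:ℝ)+1)^3 := h1
      _ ≤ c 1 / ((n:ℝ)+1)^2 := h2
      _ = c 1 * (1/((n:ℝ)+1)^2) := by ring
  have hsum2 : Summable (fun n : ℕ => c 1 * (1/((n:ℝ)+1)^2)) := by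
    have h0 : Summable (fun n : ℕ => 1/((n:ℝ))^2) :=
      summable_one_div_nat_pow.mpr one_lt_two
    have h1 := (summable_nat_add_iff 1).mpr h0
    have h2 : Summable (fun n : ℕ => 1/((n:ℝ)+1)^2) := by
      simpa [Nat.cast_add, Nat.cast_one] using h1
    exact h2.mul_left (c 1)
  have habs_sum : Summable (fun n => |term n|) :=
    Summable.of_nonneg_of_le (fun n => abs_nonneg _) hbound hsum2
  have hsum : Summable term := summable_abs_iff.mp habs_sum
  refine ⟨habs_sum, ?_⟩
  -- positivity
  have hw0 : w 0 = Real.sin ρ * Real.sin x := by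
    rw [hw_def]; norm_num
  have hsinρ : 0 < Real.sin ρ := Real.sin_pos_of_pos_of_lt_pi hρ0 (by linarith)
  have hsinx : 0 < Real.sin x := Real.sin_pos_of_pos_of_lt_pi hx0 (by linarith)
  set ε : ℝ := (c 1 - c 2) * (Real.sin ρ * Real.sin x) with hεdef
  have hεpos : 0 < ε := by
    apply mul_pos
    · have := (hc 1 le_rfl).2; linarith
    · exact mul_pos hsinρ hsinx
  have hA : ∀ N : ℕ, 2 ≤ N →
      ε + c N * (∑ n ∈ Finset.range N, w n) ≤ ∑ n ∈ Finset.range N, c (n+1) * w n := by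
    intro N hN
    induction N, hN using Nat.le_induction with
    | base =>
      have e : ε + c 2 * (∑ n ∈ Finset.range 2, w n)
          = ∑ n ∈ Finset.range 2, c (n+1) * w n := by
        rw [Finset.sum_range_succ, Finset.sum_range_succ, Finset.sum_range_zero,
          Finset.sum_range_succ, Finset.sum_range_succ, Finset.sum_range_zero,
          hεdef, hw0]
        ring
      exact e.le
    | succ N hN2 ih =>
      rw [Finset.sum_range_succ, Finset.sum_range_succ]
      have h1 : c (N+1) * (∑ n ∈ Finset.range N, w n)
          ≤ c N * (∑ n ∈ Finset.range N, w n) :=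
        mul_le_mul_of_nonneg_right (hcdec N (by omega)) (hU N)
      nlinarith [ih]
  have hAε : ∀ N : ℕ, 2 ≤ N → ε ≤ ∑ n ∈ Finset.range N, term n := by
    intro N hN
    have h1 := hA N hN
    have h2 : 0 ≤ c N * (∑ n ∈ Finset.range N, w n) :=
      mul_nonneg (hcpos N (by omega)).le (hU N)
    have h3 : ∑ n ∈ Finset.range N, term n = ∑ n ∈ Finset.range N, c (n+1) * w n :=
      Finset.sum_congr rfl fun n _ => hterm n
    linarith
  have htend := hsum.hasSum.tendsto_sum_nat
  have hge : ε ≤ ∑' n, term n :=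
    ge_of_tendsto htend (Filter.eventually_atTop.mpr ⟨2, hAε⟩)
  linarith
end
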